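/- arXiv:0805.1872 — 4 statements merged into one kernel-verified Lean document; each statement's English description precedes it below -/
import Mathlib

section
/- The exponential generating function for permutations avoiding k-σ equals exp(∫ f(x) dx), where f(x) is the exponential generating function for permutations avoiding the contiguous pattern σ, σ is contiguous, and k exceeds all letters of σ. (Equivalently, g(x) = 1 + ∫ g(x) f(x) dx where g is the EGF of (k-σ)-avoiders.) -/
/-- `l` is a permutation of `{1, …, n}`. -/
def IsPermOf (n : ℕ) (l : List ℕ) : Prop :=
  l.Perm ((List.range n).map (· + 1))

/-- The word `w` forms the partially ordered pattern `σ`. -/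
def FormsPOP (σ w : List ℕ) : Prop :=
  w.length = σ.length ∧
  ∀ i j, i < σ.length → j < σ.length →
    σ.getD i 0 < σ.getD j 0 → w.getD i 0 < w.getD j 0

/-- `π` contains an occurrence of the contiguous pattern `σ`. -/
def OccursContig (σ π : List ℕ) : Prop :=
  ∃ A w B, π = A ++ w ++ B ∧ FormsPOP σ w

/-- occurrence of `k-σ`: a large element to the left of a consecutive occurrence of `σ`. -/
def OccursKS (σ π : List ℕ) : Prop :=
  ∃ A x B w C, π = A ++ x :: (B ++ w ++ C) ∧ FormsPOP σ w ∧ ∀ y ∈ w, y < x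

/-- Exponential generating function of a counting sequence. -/
noncomputable def egf (c : ℕ → ℕ) : PowerSeries ℚ :=
  PowerSeries.mk fun n => (c n : ℚ) / (Nat.factorial n : ℚ)

/-- Formal integral of a power series: `∫ Σ aₙ xⁿ = Σ aₙ x^(n+1)/(n+1)`. -/
noncomputable def pintegral (F : PowerSeries ℚ) : PowerSeries ℚ :=
  PowerSeries.mk fun n => if n = 0 then 0 else (PowerSeries.coeff (R := ℚ) (n - 1)) F / (n : ℚ)

namespace KS

def std (k : ℕ) : List ℕ := (List.range k).map (· + 1)

lemma mem_std {a k : ℕ} : a ∈ std k ↔ 1 ≤ a ∧ a ≤ k := by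
  simp only [std, List.mem_map, List.mem_range]
  constructor
  · rintro ⟨i, hi, rfl⟩; omega
  · rintro ⟨h1, h2⟩; exact ⟨a - 1, by omega, by omega⟩

lemma nodup_std (k : ℕ) : (std k).Nodup :=
  (List.nodup_range (n := k)).map (fun a b h => by omega)

lemma toFinset_std (k : ℕ) : (std k).toFinset = Finset.Icc 1 k := by
  ext a; simp [mem_std]

lemma formsPOP_ne_nil {σ w : List ℕ} (hσ : σ ≠ []) (h : FormsPOP σ w) : w ≠ [] := by
  intro e; subst e
  exact hσ (List.eq_nil_of_length_eq_zero (by simpa using h.1.symm))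

lemma formsPOP_map {σ w : List ℕ} {φ : ℕ → ℕ}
    (hφ : ∀ a ∈ w, ∀ b ∈ w, a < b → φ a < φ b) (h : FormsPOP σ w) :
    FormsPOP σ (w.map φ) := by
  obtain ⟨h1, h2⟩ := h
  refine ⟨by simpa using h1, fun i j hi hj hlt => ?_⟩
  have hi' : i < w.length := h1 ▸ hi
  have hj' : j < w.length := h1 ▸ hj
  rw [List.getD_eq_getElem _ _ (by simpa using hi'), List.getD_eq_getElem _ _ (by simpa using hj'),
    List.getElem_map, List.getElem_map]
  refine hφ _ (List.getElem_mem _) _ (List.getElem_mem _) ?_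
  have := h2 i j hi hj hlt
  rwa [List.getD_eq_getElem _ _ hi', List.getD_eq_getElem _ _ hj'] at this

lemma formsPOP_of_map {σ w : List ℕ} {φ : ℕ → ℕ}
    (hφ : ∀ a ∈ w, ∀ b ∈ w, φ a < φ b → a < b) (h : FormsPOP σ (w.map φ)) :
    FormsPOP σ w := by
  obtain ⟨h1, h2⟩ := h
  have h1' : w.length = σ.length := by simpa using h1
  refine ⟨h1', fun i j hi hj hlt => ?_⟩
  have hi' : i < w.length := h1' ▸ hi
  have hj' : j < w.length := h1' ▸ hj
  have := h2 i j hi hj hlt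
  rw [List.getD_eq_getElem _ _ (by simpa using hi'), List.getD_eq_getElem _ _ (by simpa using hj'),
    List.getElem_map, List.getElem_map] at this
  rw [List.getD_eq_getElem _ _ hi', List.getD_eq_getElem _ _ hj']
  exact hφ _ (List.getElem_mem _) _ (List.getElem_mem _) this

lemma occursContig_map {σ l : List ℕ} {φ : ℕ → ℕ}
    (hφ : ∀ a ∈ l, ∀ b ∈ l, a < b → φ a < φ b) (h : OccursContig σ l) :
    OccursContig σ (l.map φ) := by
  obtain ⟨A, w, B, rfl, hw⟩ := h
  exact ⟨A.map φ, w.map φ, B.map φ, by simp,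
    formsPOP_map (fun a ha b hb => hφ a (by simp [ha]) b (by simp [hb])) hw⟩

lemma occursContig_of_map {σ l : List ℕ} {φ : ℕ → ℕ}
    (hφ : ∀ a ∈ l, ∀ b ∈ l, φ a < φ b → a < b) (h : OccursContig σ (l.map φ)) :
    OccursContig σ l := by
  obtain ⟨A, w, B, heq, hw⟩ := h
  rw [List.append_assoc] at heq
  obtain ⟨l₁, l₂, rfl, h₁, h₂⟩ := List.map_eq_append_iff.1 heq
  obtain ⟨l₃, l₄, rfl, h₃, h₄⟩ := List.map_eq_append_iff.1 h₂
  subst h₃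
  exact ⟨l₁, l₃, l₄, by simp,
    formsPOP_of_map (fun a ha b hb => hφ a (by simp [ha]) b (by simp [hb])) hw⟩

lemma occursKS_map {σ l : List ℕ} {φ : ℕ → ℕ}
    (hφ : ∀ a ∈ l, ∀ b ∈ l, a < b → φ a < φ b) (h : OccursKS σ l) :
    OccursKS σ (l.map φ) := by
  obtain ⟨A, x, B, w, C, rfl, hw, hlt⟩ := h
  refine ⟨A.map φ, φ x, B.map φ, w.map φ, C.map φ, by simp,
    formsPOP_map (fun a ha b hb => hφ a (by simp [ha]) b (by simp [hb])) hw, ?_⟩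
  intro y hy
  obtain ⟨y₀, hy₀, rfl⟩ := List.mem_map.1 hy
  exact hφ y₀ (by simp [hy₀]) x (by simp) (hlt y₀ hy₀)

lemma occursKS_of_map {σ l : List ℕ} {φ : ℕ → ℕ}
    (hφ : ∀ a ∈ l, ∀ b ∈ l, φ a < φ b → a < b) (h : OccursKS σ (l.map φ)) :
    OccursKS σ l := by
  obtain ⟨A, x, B, w, C, heq, hw, hlt⟩ := h
  obtain ⟨l₁, l₂, rfl, h₁, h₂⟩ := List.map_eq_append_iff.1 heq
  obtain ⟨x₀, l₂', rfl, rfl, h₂'⟩ := List.map_eq_cons_iff.1 h₂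
  rw [List.append_assoc] at h₂'
  obtain ⟨l₃, l₄, rfl, h₃, h₄⟩ := List.map_eq_append_iff.1 h₂'
  obtain ⟨l₅, l₆, rfl, h₅, h₆⟩ := List.map_eq_append_iff.1 h₄
  subst h₅
  refine ⟨l₁, x₀, l₃, l₅, l₆, by simp,
    formsPOP_of_map (fun a ha b hb => hφ a (by simp [ha]) b (by simp [hb])) hw, ?_⟩
  intro y hy
  exact hφ y (by simp [hy]) x₀ (by simp) (hlt (φ y) (by subst h₃; exact List.mem_map_of_mem hy))

lemma split3 {X Y Z A B : List ℕ} {m : ℕ} (h : X ++ Y ++ Z = A ++ m :: B)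
    (hm : m ∉ Y) (hY : Y ≠ []) :
    (∃ Z₁, A = X ++ Y ++ Z₁ ∧ Z = Z₁ ++ m :: B) ∨
    (∃ X₁, X = A ++ m :: X₁ ∧ B = X₁ ++ Y ++ Z) := by
  rw [List.append_assoc] at h
  rcases List.append_eq_append_iff.1 h with ⟨t, rfl, h2⟩ | ⟨t, rfl, h2⟩
  · rcases List.append_eq_append_iff.1 h2 with ⟨u, rfl, h3⟩ | ⟨u, rfl, h3⟩
    · exact Or.inl ⟨u, by simp, h3⟩
    · rcases u with _ | ⟨c, u⟩
      · simp at h3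
        exact Or.inl ⟨[], by simp, by simp [h3]⟩
      · rw [List.cons_append] at h3
        injection h3 with e1 e2
        subst e1
        exact absurd (by simp) hm
  · rcases t with _ | ⟨c, t⟩
    · simp only [List.nil_append] at h2
      obtain ⟨y, Y', rfl⟩ := List.exists_cons_of_ne_nil hY
      rw [List.cons_append] at h2
      injection h2 with e1 e2
      subst e1
      exact absurd (by simp) hm
    · rw [List.cons_append] at h2
      injection h2 with e1 e2
      subst e1
      exact Or.inr ⟨t, rfl, by rw [List.append_assoc]; exact e2⟩

lemma occursKS_iff {σ π : List ℕ} :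
    OccursKS σ π ↔ ∃ pre w suf, π = pre ++ w ++ suf ∧ FormsPOP σ w ∧ ∃ x ∈ pre, ∀ y ∈ w, y < x := by
  constructor
  · rintro ⟨A, x, B, w, C, rfl, hw, hlt⟩
    exact ⟨A ++ x :: B, w, C, by simp, hw, x, by simp, hlt⟩
  · rintro ⟨pre, w, suf, rfl, hw, x, hx, hlt⟩
    obtain ⟨s, t, rfl⟩ := List.append_of_mem hx
    exact ⟨s, x, t, w, suf, by simp, hw, hlt⟩

lemma occursKS_append {σ A B : List ℕ} {m : ℕ} (hσ : σ ≠ [])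
    (hm : ∀ y ∈ A ++ B, y < m) :
    OccursKS σ (A ++ m :: B) ↔ OccursKS σ A ∨ OccursContig σ B := by
  constructor
  · intro h
    obtain ⟨pre, w, suf, heq, hw, x, hx, hlt⟩ := occursKS_iff.1 h
    have hxl : x ∈ A ++ m :: B := by
      rw [heq]; simp only [List.mem_append]; left; left; exact hx
    have hxm : x ≤ m := by
      rcases List.mem_append.1 hxl with h' | h'
      · exact le_of_lt (hm x (by simp [h']))
      · rcases List.mem_cons.1 h' with rfl | h''
        · exact le_rfl
        · exact le_of_lt (hm x (by simp [h'']))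
    have hmw : m ∉ w := fun hmem => absurd (lt_of_lt_of_le (hlt m hmem) hxm) (lt_irrefl m)
    rcases split3 heq.symm hmw (formsPOP_ne_nil hσ hw) with ⟨Z₁, hA, _⟩ | ⟨X₁, hpre, hB⟩
    · left
      exact occursKS_iff.2 ⟨pre, w, Z₁, by rw [hA, List.append_assoc], hw, x, hx, hlt⟩
    · right
      exact ⟨X₁, w, suf, hB, hw⟩
  · rintro (⟨A₀, x, B₀, w, C₀, rfl, hw, hlt⟩ | ⟨P, w, Q, rfl, hw⟩)
    · exact ⟨A₀, x, B₀, w, C₀ ++ m :: B, by simp, hw, hlt⟩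
    · exact ⟨A, m, P, w, Q, by simp, hw, fun y hy => hm y (by simp [hy])⟩

noncomputable def enum (S : Finset ℕ) : ℕ → ℕ := fun j => (S.sort (·≤·)).getD (j-1) 0
noncomputable def denum (S : Finset ℕ) : ℕ → ℕ := fun a => (S.sort (·≤·)).idxOf a + 1

lemma length_sort' (S : Finset ℕ) : (S.sort (·≤·)).length = S.card := Finset.length_sort _

lemma sort_strict (S : Finset ℕ) {i j : ℕ} (hi : i < S.card) (hj : j < S.card) (hij : i < j) :
    (S.sort (·≤·))[i]'(by rw [length_sort' S]; exact hi) <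
    (S.sort (·≤·))[j]'(by rw [length_sort' S]; exact hj) := by
  have hs := Finset.sortedLT_sort S
  exact hs.getElem_lt_getElem_of_lt hij

lemma enum_mono (S : Finset ℕ) {a b : ℕ} (ha : a ∈ std S.card) (hb : b ∈ std S.card) :
    a < b ↔ enum S a < enum S b := by
  obtain ⟨ha1, ha2⟩ := mem_std.1 ha
  obtain ⟨hb1, hb2⟩ := mem_std.1 hb
  have hga : enum S a = (S.sort (·≤·))[a-1]'(by rw [length_sort' S]; omega) :=
    List.getD_eq_getElem _ _ _
  have hgb : enum S b = (S.sort (·≤·))[b-1]'(by rw [length_sort' S]; omega) :=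
    List.getD_eq_getElem _ _ _
  constructor
  · intro h
    rw [hga, hgb]; exact sort_strict S (by omega) (by omega) (by omega)
  · intro h
    by_contra hc
    rcases Nat.lt_or_ge b a with h' | h'
    · have := sort_strict S (i := b-1) (j := a-1) (by omega) (by omega) (by omega)
      rw [← hga, ← hgb] at this; omega
    · have : a = b := by omega
      subst this; omega

lemma std_map_enum (S : Finset ℕ) : (std S.card).map (enum S) = S.sort (·≤·) := by
  apply List.ext_getElem
  · simp [std, length_sort']
  · intro n h1 h2
    have hn : n < S.card := by simpa [std] using h1
    simp only [std, List.getElem_map, List.getElem_range]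
    show (S.sort (·≤·)).getD (n+1-1) 0 = _
    simp only [Nat.add_sub_cancel]
    exact List.getD_eq_getElem _ _ _

lemma denum_enum (S : Finset ℕ) {j : ℕ} (hj : j ∈ std S.card) : denum S (enum S j) = j := by
  obtain ⟨h1, h2⟩ := mem_std.1 hj
  have hg : enum S j = (S.sort (·≤·))[j-1]'(by rw [length_sort' S]; omega) :=
    List.getD_eq_getElem _ _ _
  unfold denum
  rw [hg, List.Nodup.idxOf_getElem (Finset.sort_nodup _ _)]
  omega

lemma enum_denum (S : Finset ℕ) {a : ℕ} (ha : a ∈ S.sort (·≤·)) : enum S (denum S a) = a := by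
  unfold enum denum
  simp only [Nat.add_sub_cancel]
  rw [List.getD_eq_getElem _ _ (List.idxOf_lt_length_iff.2 ha)]
  exact List.getElem_idxOf _

lemma denum_mem (S : Finset ℕ) {a : ℕ} (ha : a ∈ S.sort (·≤·)) : denum S a ∈ std S.card := by
  have h := List.idxOf_lt_length_iff.2 ha
  rw [length_sort' S] at h
  refine mem_std.2 ⟨?_, ?_⟩ <;> simp only [denum] <;> omega

lemma denum_mono (S : Finset ℕ) {a b : ℕ} (ha : a ∈ S.sort (·≤·)) (hb : b ∈ S.sort (·≤·)) :
    a < b ↔ denum S a < denum S b := by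
  have h := enum_mono S (denum_mem S ha) (denum_mem S hb)
  rw [enum_denum S ha, enum_denum S hb] at h
  exact h.symm

lemma sort_map_denum (S : Finset ℕ) : (S.sort (·≤·)).map (denum S) = std S.card := by
  conv_lhs => rw [← std_map_enum S]
  rw [List.map_map]
  exact (List.map_congr_left (fun a ha => denum_enum S ha)).trans (List.map_id _)

/-- transfer of avoider sets along standardisation -/
noncomputable def stdEquiv (P : List ℕ → Prop)
    (hP : ∀ (l : List ℕ) (φ : ℕ → ℕ),
      (∀ a ∈ l, ∀ b ∈ l, (a < b ↔ φ a < φ b)) → (P l ↔ P (l.map φ)))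
    (S : Finset ℕ) :
    {l // l.Perm (std S.card) ∧ P l} ≃ {l // l.Perm (S.sort (·≤·)) ∧ P l} where
  toFun x := ⟨x.1.map (enum S),
    (x.2.1.map (enum S)).trans (by rw [std_map_enum]),
    (hP x.1 (enum S) (fun a ha b hb =>
      enum_mono S (x.2.1.mem_iff.1 ha) (x.2.1.mem_iff.1 hb))).1 x.2.2⟩
  invFun y := ⟨y.1.map (denum S),
    (y.2.1.map (denum S)).trans (by rw [sort_map_denum]),
    (hP y.1 (denum S) (fun a ha b hb =>
      denum_mono S (y.2.1.mem_iff.1 ha) (y.2.1.mem_iff.1 hb))).1 y.2.2⟩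
  left_inv x := by
    apply Subtype.ext
    show (x.1.map (enum S)).map (denum S) = x.1
    rw [List.map_map]
    exact (List.map_congr_left (fun a ha => denum_enum S (x.2.1.mem_iff.1 ha))).trans
      (List.map_id _)
  right_inv y := by
    apply Subtype.ext
    show (y.1.map (denum S)).map (enum S) = y.1
    rw [List.map_map]
    exact (List.map_congr_left (fun a ha => enum_denum S (y.2.1.mem_iff.1 ha))).trans
      (List.map_id _)

lemma finite_perm_and (l₀ : List ℕ) (P : List ℕ → Prop) :
    Finite {l : List ℕ // l.Perm l₀ ∧ P l} := by
  have : {l : List ℕ | l.Perm l₀ ∧ P l}.Finite :=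
    ((l₀.permutations).finite_toSet).subset (fun l h => List.mem_permutations.2 h.1)
  exact this.to_subtype

lemma hP_KS (σ : List ℕ) : ∀ (l : List ℕ) (φ : ℕ → ℕ),
    (∀ a ∈ l, ∀ b ∈ l, (a < b ↔ φ a < φ b)) → (¬OccursKS σ l ↔ ¬OccursKS σ (l.map φ)) :=
  fun l φ hφ => not_congr ⟨occursKS_map (fun a ha b hb => (hφ a ha b hb).1),
    occursKS_of_map (fun a ha b hb => (hφ a ha b hb).2)⟩

lemma hP_C (σ : List ℕ) : ∀ (l : List ℕ) (φ : ℕ → ℕ),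
    (∀ a ∈ l, ∀ b ∈ l, (a < b ↔ φ a < φ b)) → (¬OccursContig σ l ↔ ¬OccursContig σ (l.map φ)) :=
  fun l φ hφ => not_congr ⟨occursContig_map (fun a ha b hb => (hφ a ha b hb).1),
    occursContig_of_map (fun a ha b hb => (hφ a ha b hb).2)⟩

noncomputable def AK (σ : List ℕ) (n : ℕ) : ℕ :=
  Nat.card {l : List ℕ // IsPermOf n l ∧ ¬ OccursKS σ l}

noncomputable def AC (σ : List ℕ) (n : ℕ) : ℕ :=
  Nat.card {l : List ℕ // IsPermOf n l ∧ ¬ OccursContig σ l}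

lemma card_sort_KS (σ : List ℕ) (S : Finset ℕ) :
    Nat.card {A : List ℕ // A.Perm (S.sort (·≤·)) ∧ ¬ OccursKS σ A} = AK σ S.card :=
  (Nat.card_congr (stdEquiv _ (hP_KS σ) S)).symm

lemma card_sort_C (σ : List ℕ) (S : Finset ℕ) :
    Nat.card {A : List ℕ // A.Perm (S.sort (·≤·)) ∧ ¬ OccursContig σ A} = AC σ S.card :=
  (Nat.card_congr (stdEquiv _ (hP_C σ) S)).symm

lemma nat_card_sigma {ι : Type*} [Fintype ι] (F : ι → Type*) [∀ i, Finite (F i)] :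
    Nat.card (Σ i, F i) = ∑ i, Nat.card (F i) := by
  letI : ∀ i, Fintype (F i) := fun i => Fintype.ofFinite _
  simp [Nat.card_eq_fintype_card, Fintype.card_sigma]

lemma mem_of_perm_sort {S : Finset ℕ} {A : List ℕ} (hA : A.Perm (S.sort (·≤·))) {a : ℕ} :
    a ∈ A ↔ a ∈ S := by rw [hA.mem_iff, Finset.mem_sort]

lemma nodup_of_perm_sort {S : Finset ℕ} {A : List ℕ} (hA : A.Perm (S.sort (·≤·))) : A.Nodup :=
  hA.nodup_iff.2 (Finset.sort_nodup _ _)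

lemma toFinset_of_perm_sort {S : Finset ℕ} {A : List ℕ} (hA : A.Perm (S.sort (·≤·))) :
    A.toFinset = S := by
  ext a; rw [List.mem_toFinset]; exact mem_of_perm_sort hA

lemma split_unique {A B A' B' : List ℕ} {m : ℕ} (h : A ++ m :: B = A' ++ m :: B')
    (hA : m ∉ A) (hA' : m ∉ A') : A = A' ∧ B = B' := by
  rcases List.append_eq_append_iff.1 h with ⟨t, rfl, h2⟩ | ⟨t, rfl, h2⟩
  · rcases t with _ | ⟨c, t⟩
    · simp only [List.nil_append] at h2
      injection h2 with _ e2
      exact ⟨by simp, e2⟩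
    · rw [List.cons_append] at h2
      injection h2 with e1 _
      subst e1
      exact absurd (by simp) hA'
  · rcases t with _ | ⟨c, t⟩
    · simp only [List.nil_append] at h2
      injection h2 with _ e2
      exact ⟨by simp, e2.symm⟩
    · rw [List.cons_append] at h2
      injection h2 with e1 _
      subst e1
      exact absurd (by simp) hA

section Assembly

variable {σ : List ℕ} (n : ℕ)

lemma assemble (hσ : σ ≠ []) {S : Finset ℕ} (hS : S ⊆ Finset.Icc 1 n) {A B : List ℕ}
    (hA : A.Perm (S.sort (·≤·))) (hB : B.Perm (((Finset.Icc 1 n) \ S).sort (·≤·)))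
    (hA2 : ¬ OccursKS σ A) (hB2 : ¬ OccursContig σ B) :
    (A ++ (n+1) :: B).Perm (std (n+1)) ∧ ¬ OccursKS σ (A ++ (n+1) :: B) := by
  have hmA : ∀ a ∈ A, a ∈ S := fun a ha => (mem_of_perm_sort hA).1 ha
  have hmB : ∀ b ∈ B, b ∈ (Finset.Icc 1 n) \ S := fun b hb => (mem_of_perm_sort hB).1 hb
  have hAb : ∀ a ∈ A, 1 ≤ a ∧ a ≤ n := fun a ha => Finset.mem_Icc.1 (hS (hmA a ha))
  have hBb : ∀ b ∈ B, 1 ≤ b ∧ b ≤ n := fun b hb =>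
    Finset.mem_Icc.1 (Finset.mem_sdiff.1 (hmB b hb)).1
  have hnodup : (A ++ (n+1) :: B).Nodup := by
    rw [List.nodup_append]
    refine ⟨nodup_of_perm_sort hA, List.nodup_cons.2 ⟨fun hc => ?_, nodup_of_perm_sort hB⟩, ?_⟩
    · have := hBb _ hc; omega
    · intro a haA b haB hab
      subst hab
      rcases List.mem_cons.1 haB with rfl | haB'
      · have := hAb _ haA; omega
      · exact (Finset.mem_sdiff.1 (hmB a haB')).2 (hmA a haA)
  have htf : (A ++ (n+1) :: B).toFinset = Finset.Icc 1 (n+1) := by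
    ext a
    simp only [List.toFinset_append, List.toFinset_cons, Finset.mem_union, Finset.mem_insert,
      List.mem_toFinset, Finset.mem_Icc]
    constructor
    · rintro (h | rfl | h)
      · have := hAb _ h; omega
      · omega
      · have := hBb _ h; omega
    · rintro ⟨h1, h2⟩
      rcases Nat.lt_or_ge a (n+1) with h' | h'
      · by_cases hmem : a ∈ S
        · left
          exact (mem_of_perm_sort hA).2 hmem
        · right; right
          exact (mem_of_perm_sort hB).2 (Finset.mem_sdiff.2 ⟨Finset.mem_Icc.2 ⟨h1, by omega⟩, hmem⟩)
      · right; left; omega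
  constructor
  · exact List.perm_of_nodup_nodup_toFinset_eq hnodup (nodup_std _)
      (by rw [htf, toFinset_std])
  · intro h
    rcases (occursKS_append hσ (fun y hy => by
      rcases List.mem_append.1 hy with h' | h'
      · have := hAb _ h'; omega
      · have := hBb _ h'; omega)).1 h with h' | h'
    · exact hA2 h'
    · exact hB2 h'

lemma disassemble (hσ : σ ≠ []) {l : List ℕ} (hl : l.Perm (std (n+1))) (h2 : ¬ OccursKS σ l) :
    ∃ S : Finset ℕ, S ⊆ Finset.Icc 1 n ∧ ∃ A B : List ℕ, l = A ++ (n+1) :: B ∧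
      A.toFinset = S ∧ A.Perm (S.sort (·≤·)) ∧
      B.Perm (((Finset.Icc 1 n) \ S).sort (·≤·)) ∧
      ¬ OccursKS σ A ∧ ¬ OccursContig σ B := by
  have hmem : ∀ a, a ∈ l ↔ (1 ≤ a ∧ a ≤ n+1) := fun a => by rw [hl.mem_iff, mem_std]
  have hnl : l.Nodup := hl.nodup_iff.2 (nodup_std _)
  obtain ⟨A, B, rfl⟩ := List.append_of_mem ((hmem (n+1)).2 ⟨by omega, le_rfl⟩)
  rw [List.nodup_append] at hnl
  obtain ⟨hndA, hndCB, hdisj⟩ := hnl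
  obtain ⟨hnB, hndB⟩ := List.nodup_cons.1 hndCB
  have hnA : (n+1) ∉ A := fun hc => hdisj _ hc _ (by simp) rfl
  have hAb : ∀ a ∈ A, 1 ≤ a ∧ a ≤ n := by
    intro a ha
    have h1 := (hmem a).1 (by simp [ha])
    have : a ≠ n+1 := fun hc => hnA (hc ▸ ha)
    omega
  have hBb : ∀ b ∈ B, 1 ≤ b ∧ b ≤ n := by
    intro b hb
    have h1 := (hmem b).1 (by simp [hb])
    have : b ≠ n+1 := fun hc => hnB (hc ▸ hb)
    omega
  refine ⟨A.toFinset, fun a ha => Finset.mem_Icc.2 (hAb a (List.mem_toFinset.1 ha)), A, B,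
    rfl, rfl, ?_, ?_, ?_, ?_⟩
  · exact List.perm_of_nodup_nodup_toFinset_eq hndA (Finset.sort_nodup _ _)
      (by rw [Finset.sort_toFinset])
  · refine List.perm_of_nodup_nodup_toFinset_eq hndB (Finset.sort_nodup _ _) ?_
    rw [Finset.sort_toFinset]
    ext b
    simp only [List.mem_toFinset, Finset.mem_sdiff, Finset.mem_Icc]
    constructor
    · intro hb
      exact ⟨hBb b hb, fun hc => hdisj _ hc _ (by simp [hb]) rfl⟩
    · rintro ⟨⟨hb1, hb2⟩, hb3⟩
      have := (hmem b).2 ⟨hb1, by omega⟩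
      rcases List.mem_append.1 this with h' | h'
      · exact absurd h' hb3
      · rcases List.mem_cons.1 h' with rfl | h''
        · omega
        · exact h''
  · intro hc
    exact h2 ((occursKS_append hσ (fun y hy => by
      rcases List.mem_append.1 hy with h' | h'
      · have := hAb _ h'; omega
      · have := hBb _ h'; omega)).2 (Or.inl hc))
  · intro hc
    exact h2 ((occursKS_append hσ (fun y hy => by
      rcases List.mem_append.1 hy with h' | h'
      · have := hAb _ h'; omega
      · have := hBb _ h'; omega)).2 (Or.inr hc))

end Assembly

lemma recurrence (σ : List ℕ) (hσ : σ ≠ []) (n : ℕ) :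
    AK σ (n+1) = ∑ j ∈ Finset.range (n+1), n.choose j * (AK σ j * AC σ (n-j)) := by
  classical
  set I : Finset ℕ := Finset.Icc 1 n with hI
  let F : Finset ℕ → Type := fun S =>
    {A : List ℕ // A.Perm (S.sort (·≤·)) ∧ ¬ OccursKS σ A} ×
    {B : List ℕ // B.Perm ((I \ S).sort (·≤·)) ∧ ¬ OccursContig σ B}
  haveI hfin : ∀ S : Finset ℕ, Finite (F S) := fun S => by
    haveI := finite_perm_and (S.sort (·≤·)) (fun A => ¬ OccursKS σ A)
    haveI := finite_perm_and ((I \ S).sort (·≤·)) (fun B => ¬ OccursContig σ B)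
    exact inferInstanceAs (Finite (_ × _))
  let G : (Σ S : I.powerset, F S.1) → {l : List ℕ // l.Perm (std (n+1)) ∧ ¬ OccursKS σ l} :=
    fun x => ⟨x.2.1.1 ++ (n+1) :: x.2.2.1,
      assemble n hσ (Finset.mem_powerset.1 x.1.2) x.2.1.2.1 x.2.2.2.1 x.2.1.2.2 x.2.2.2.2⟩
  have hGbij : Function.Bijective G := by
    constructor
    · rintro ⟨⟨S, hS⟩, ⟨A, hA, hA2⟩, ⟨B, hB, hB2⟩⟩ ⟨⟨S', hS'⟩, ⟨A', hA', hA2'⟩, ⟨B', hB', hB2'⟩⟩ h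
      have heq : A ++ (n+1) :: B = A' ++ (n+1) :: B' := congrArg Subtype.val h
      have hnA : (n+1) ∉ A := fun hc => by
        have := Finset.mem_Icc.1 (Finset.mem_powerset.1 hS ((mem_of_perm_sort hA).1 hc)); omega
      have hnA' : (n+1) ∉ A' := fun hc => by
        have := Finset.mem_Icc.1 (Finset.mem_powerset.1 hS' ((mem_of_perm_sort hA').1 hc)); omega
      obtain ⟨rfl, rfl⟩ := split_unique heq hnA hnA'
      have hSeq : S = S' := (toFinset_of_perm_sort hA).symm.trans (toFinset_of_perm_sort hA')
      subst hSeq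
      rfl
    · rintro ⟨l, hl, h2⟩
      obtain ⟨S, hS, A, B, rfl, _, hA, hB, hA2, hB2⟩ := disassemble n hσ hl h2
      exact ⟨⟨⟨S, Finset.mem_powerset.2 hS⟩, ⟨A, hA, hA2⟩, ⟨B, hB, hB2⟩⟩, rfl⟩
  have hcard : AK σ (n+1) = ∑ S ∈ I.powerset, AK σ S.card * AC σ (n - S.card) := by
    have e1 : AK σ (n+1) = Nat.card (Σ S : I.powerset, F S.1) :=
      Nat.card_congr (Equiv.ofBijective G hGbij).symm
    rw [e1, nat_card_sigma]
    rw [← Finset.sum_coe_sort I.powerset (fun S => AK σ S.card * AC σ (n - S.card))]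
    refine Finset.sum_congr rfl (fun S _ => ?_)
    have : Nat.card (F S.1) = Nat.card {A : List ℕ // A.Perm ((S : Finset ℕ).sort (·≤·)) ∧ ¬ OccursKS σ A} *
        Nat.card {B : List ℕ // B.Perm ((I \ (S : Finset ℕ)).sort (·≤·)) ∧ ¬ OccursContig σ B} :=
      Nat.card_prod _ _
    rw [this, card_sort_KS, card_sort_C]
    have hsub : (S : Finset ℕ) ⊆ I := Finset.mem_powerset.1 S.2
    have hIc : I.card = n := by rw [hI, Nat.card_Icc]; omega
    have hc := Finset.card_sdiff_of_subset hsub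
    rw [hIc] at hc
    rw [hc]
  rw [hcard, Finset.sum_powerset]
  have hIcard : I.card = n := by rw [hI, Nat.card_Icc]; omega
  rw [hIcard]
  refine Finset.sum_congr rfl (fun j hj => ?_)
  have : ∀ S ∈ Finset.powersetCard j I, AK σ S.card * AC σ (n - S.card) = AK σ j * AC σ (n-j) := by
    intro S hSj
    rw [(Finset.mem_powersetCard.1 hSj).2]
  rw [Finset.sum_congr rfl this, Finset.sum_const, Finset.card_powersetCard, hIcard, smul_eq_mul]

lemma AK_zero (σ : List ℕ) : AK σ 0 = 1 := by
  have hnil : IsPermOf 0 ([] : List ℕ) := by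
    show ([] : List ℕ).Perm _
    simp [IsPermOf]
  have hno : ¬ OccursKS σ ([] : List ℕ) := by
    rintro ⟨A, x, B, w, C, heq, -, -⟩
    simp at heq
  have e : {l : List ℕ // IsPermOf 0 l ∧ ¬ OccursKS σ l} ≃ PUnit.{1} :=
    { toFun := fun _ => PUnit.unit
      invFun := fun _ => ⟨[], hnil, hno⟩
      left_inv := fun x => Subtype.ext (by
        have h := x.2.1
        have : x.1.Perm [] := by simpa [IsPermOf] using h
        exact (this.eq_nil).symm ▸ rfl)
      right_inv := fun _ => rfl }
  unfold AK
  rw [Nat.card_congr e]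
  simp

end KS

open KS in
/-- The EGF `g` of `(k-σ)`-avoiders equals `exp(∫ f)` where `f` is the EGF of
`σ`-avoiders; equivalently (and this is how we state it, since it uniquely
determines `g` as `exp (∫ f)`), `g = 1 + ∫ g·f`. -/
theorem egf_avoid_ks (σ : List ℕ) (hσ : σ ≠ []) :
    egf (fun n => Nat.card {l : List ℕ // IsPermOf n l ∧ ¬ OccursKS σ l}) =
      1 + pintegral
        (egf (fun n => Nat.card {l : List ℕ // IsPermOf n l ∧ ¬ OccursKS σ l}) *
         egf (fun n => Nat.card {l : List ℕ // IsPermOf n l ∧ ¬ OccursContig σ l})) := by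
  show egf (AK σ) = 1 + pintegral (egf (AK σ) * egf (AC σ))
  apply PowerSeries.ext
  intro n
  rw [map_add, PowerSeries.coeff_one]
  simp only [egf, pintegral, PowerSeries.coeff_mk]
  cases n with
  | zero =>
    rw [AK_zero]
    norm_num
  | succ n =>
    rw [if_neg (Nat.succ_ne_zero n), if_neg (Nat.succ_ne_zero n), zero_add]
    simp only [Nat.succ_sub_one]
    rw [PowerSeries.coeff_mul, Finset.Nat.sum_antidiagonal_eq_sum_range_succ_mk]
    simp only [PowerSeries.coeff_mk]
    have hcast : (AK σ (n+1) : ℚ) =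
        ∑ k ∈ Finset.range (n+1), (n.choose k : ℚ) * (AK σ k * AC σ (n-k)) := by
      rw [recurrence σ hσ n]
      push_cast
      rfl
    rw [hcast, Finset.sum_div, Finset.sum_div]
    refine Finset.sum_congr rfl fun k hk => ?_
    have hkn : k ≤ n := Nat.lt_succ_iff.1 (Finset.mem_range.1 hk)
    rw [Nat.cast_choose ℚ hkn, Nat.factorial_succ]
    have h1 : (k.factorial : ℚ) ≠ 0 := Nat.cast_ne_zero.2 (Nat.factorial_ne_zero k)
    have h2 : ((n-k).factorial : ℚ) ≠ 0 := Nat.cast_ne_zero.2 (Nat.factorial_ne_zero (n-k))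
    have h3 : (n.factorial : ℚ) ≠ 0 := Nat.cast_ne_zero.2 (Nat.factorial_ne_zero n)
    have h4 : ((n : ℚ) + 1) ≠ 0 := by positivity
    push_cast
    field_simp
end

section
/- A permutation π avoids both the patterns 3-12 and k-(k-1)...21 if and only if π is a concatenation of decreasing sequences, each of length less than k, in which the first element of each decreasing sequence is greater than the first element of the preceding one. Consequently, permutations avoiding both patterns are in bijection with set partitions with all block sizes less than k. -/
/-- Occurrence of the generalized pattern `3-12` in `π`. -/
def Occ312 (π : List ℕ) : Prop :=
  ∃ i j, i < j ∧ j + 1 < π.length ∧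
    π.getD j 0 < π.getD (j + 1) 0 ∧ π.getD (j + 1) 0 < π.getD i 0

/-- The decreasing word `(k-1)(k-2)⋯21`. -/
def decWord (k : ℕ) : List ℕ := ((List.range (k - 1)).reverse).map (· + 1)


namespace AvoidAux

def headVal (p : List ℕ) : ℕ := p.headD 0
def lastVal (p : List ℕ) : ℕ := p.getLast?.getD 0

lemma headVal_getD (p : List ℕ) : headVal p = p.getD 0 0 := by
  cases p <;> simp [headVal]

lemma lastVal_getD (p : List ℕ) (hp : p ≠ []) : lastVal p = p.getD (p.length - 1) 0 := by
  rw [lastVal, List.getLast?_eq_getElem?, List.getD_eq_getElem?_getD]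

lemma lastVal_cons_cons (a b : ℕ) (p : List ℕ) :
    lastVal (a :: b :: p) = lastVal (b :: p) := by
  simp [lastVal, List.getLast?]

/-- last element is at most the head for a decreasing list -/
lemma lastVal_le_headVal {p : List ℕ} (hp : p ≠ []) (hc : p.Chain' (· > ·)) :
    lastVal p ≤ headVal p := by
  induction p with
  | nil => simp at hp
  | cons a q ih =>
    cases q with
    | nil => simp [lastVal, headVal]
    | cons b r =>
      rw [lastVal_cons_cons]
      have hc' : (b :: r).Chain' (· > ·) := hc.tail
      have := ih (by simp) hc'
      have hab : b < a := (List.isChain_cons_cons.mp hc).1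
      simp only [headVal, List.headD] at *
      omega

lemma mem_le_headVal {p : List ℕ} (hc : p.Chain' (· > ·)) {y : ℕ} (hy : y ∈ p) :
    y ≤ headVal p := by
  cases p with
  | nil => simp at hy
  | cons a q =>
    rcases List.mem_cons.mp hy with h | h
    · simp [headVal, h]
    · have hpw : (a :: q).Pairwise (· > ·) := List.isChain_iff_pairwise.mp hc
      have := (List.pairwise_cons.mp hpw).1 y h
      simp [headVal]; omega

def pushRun (a : ℕ) : List (List ℕ) → List (List ℕ)
  | (b :: p) :: rs => if b < a then (a :: b :: p) :: rs else [a] :: (b :: p) :: rs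
  | rs => [a] :: rs

lemma pushRun_nil (a : ℕ) : pushRun a [] = [[a]] := rfl
lemma pushRun_nil_cons (a : ℕ) (rs : List (List ℕ)) : pushRun a ([] :: rs) = [a] :: [] :: rs := rfl
lemma pushRun_cons (a b : ℕ) (p : List ℕ) (rs : List (List ℕ)) :
    pushRun a ((b :: p) :: rs) = if b < a then (a :: b :: p) :: rs else [a] :: (b :: p) :: rs := rfl

def runs : List ℕ → List (List ℕ)
  | [] => []
  | a :: l => pushRun a (runs l)

lemma flatten_pushRun (a : ℕ) (L : List (List ℕ)) :
    (pushRun a L).flatten = a :: L.flatten := by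
  match L with
  | (b :: p) :: rs => rw [pushRun_cons]; split <;> simp
  | [] => rfl
  | [] :: rs => rfl

lemma flatten_runs (l : List ℕ) : (runs l).flatten = l := by
  induction l with
  | nil => rfl
  | cons a l ih => rw [runs, flatten_pushRun, ih]

lemma runs_mem {l : List ℕ} {p : List ℕ} (hp : p ∈ runs l) :
    p ≠ [] ∧ p.Chain' (· > ·) := by
  induction l generalizing p with
  | nil => simp [runs] at hp
  | cons a l ih =>
    rw [runs] at hp
    rcases hL : runs l with _ | ⟨_ | ⟨b, q⟩, rs⟩
    · rw [hL, pushRun_nil] at hp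
      simp at hp; subst hp; exact ⟨by simp, by simp [List.Chain']⟩
    · exfalso
      have := ih (p := []) (by rw [hL]; simp)
      exact this.1 rfl
    · rw [hL, pushRun_cons] at hp
      split at hp
      · rcases List.mem_cons.mp hp with h | h
        · subst h
          have := ih (p := b :: q) (by rw [hL]; simp)
          exact ⟨by simp, List.isChain_cons_cons.mpr ⟨by assumption, this.2⟩⟩
        · exact ih (by rw [hL]; simp [h])
      · rcases List.mem_cons.mp hp with h | h
        · subst h; exact ⟨by simp, by simp [List.Chain']⟩
        · exact ih (by rw [hL]; exact h)

lemma runs_cons (a : ℕ) (l : List ℕ) :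
    ∃ q rs, runs (a :: l) = (a :: q) :: rs := by
  rw [runs]
  rcases hL : runs l with _ | ⟨_ | ⟨b, p⟩, rs⟩
  · exact ⟨[], [], rfl⟩
  · exact ⟨[], [] :: rs, rfl⟩
  · rw [pushRun_cons]; split
    · exact ⟨b :: p, rs, rfl⟩
    · exact ⟨[], (b :: p) :: rs, rfl⟩


lemma runs_append {p l : List ℕ} (hp : p ≠ []) (hc : p.Chain' (· > ·))
    (hb : ∀ y, l.head? = some y → lastVal p < y) :
    runs (p ++ l) = p :: runs l := by
  induction p with
  | nil => simp at hp
  | cons a q ih =>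
    cases q with
    | nil =>
      rw [List.singleton_append, runs]
      cases l with
      | nil => simp [runs, pushRun_nil]
      | cons c t =>
        obtain ⟨q', rs', hq⟩ := runs_cons c t
        rw [hq, pushRun_cons]
        have hac : a < c := hb c rfl
        rw [if_neg (by omega)]
    | cons b r =>
      have hab : b < a := (List.isChain_cons_cons.mp hc).1
      have ih2 : runs ((b :: r) ++ l) = (b :: r) :: runs l :=
        ih (by simp) hc.tail
          (by intro y hy; rw [← lastVal_cons_cons a b r]; exact hb y hy)
      show pushRun a (runs ((b :: r) ++ l)) = _
      rw [ih2, pushRun_cons, if_pos hab]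

lemma headVal_flatten {L : List (List ℕ)} (hL : ∀ p ∈ L, p ≠ []) (hne : L ≠ []) :
    L.flatten.head? = (L.headD []).head? := by
  cases L with
  | nil => simp at hne
  | cons p rs =>
    have hp : p ≠ [] := hL p (by simp)
    cases p with
    | nil => simp at hp
    | cons a q => simp

lemma runs_unique {L : List (List ℕ)} (h1 : ∀ p ∈ L, p ≠ []) (h2 : ∀ p ∈ L, p.Chain' (· > ·))
    (h3 : L.Chain' (fun q r => lastVal q < headVal r)) :
    runs L.flatten = L := by
  induction L with
  | nil => simp [runs]
  | cons p rs ih =>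
    have hp : p ≠ [] := h1 p (by simp)
    rw [List.flatten_cons, runs_append hp (h2 p (by simp))]
    · rw [ih (fun q hq => h1 q (by simp [hq])) (fun q hq => h2 q (by simp [hq])) h3.tail]
    · intro y hy
      cases rs with
      | nil => simp at hy
      | cons q rs' =>
        have hq : q ≠ [] := h1 q (by simp)
        rw [headVal_flatten (fun r hr => h1 r (by simp [hr])) (by simp)] at hy
        have hrel : lastVal p < headVal q := (List.isChain_cons_cons.mp h3).1
        simp only [List.headD_cons] at hy
        cases q with
        | nil => simp at hq
        | cons c t => simp at hy; subst hy; simpa [headVal] using hrel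

/-- decomposing runs: the tail runs are the runs of the remaining flatten -/
lemma runs_tail {l : List ℕ} {p : List ℕ} {rs : List (List ℕ)} (h : runs l = p :: rs) :
    l = p ++ rs.flatten ∧ runs rs.flatten = rs := by
  constructor
  · have hf := flatten_runs l
    rw [h] at hf; simpa using hf.symm
  · induction l generalizing p rs with
    | nil => simp [runs] at h
    | cons a t ih =>
      rw [runs] at h
      rcases hL : runs t with _ | ⟨_ | ⟨b, q⟩, rs'⟩
      · rw [hL, pushRun_nil] at h
        obtain ⟨rfl, rfl⟩ := List.cons.inj h
        simp [runs]
      · exfalso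
        have : ([] : List ℕ) ∈ runs t := by rw [hL]; simp
        exact (runs_mem this).1 rfl
      · have IH := ih hL
        have ht : (b :: q) ++ rs'.flatten = t := by
          have h2 := flatten_runs t; rw [hL] at h2; simpa using h2
        rw [hL, pushRun_cons] at h
        split at h
        · obtain ⟨rfl, rfl⟩ := List.cons.inj h
          exact IH
        · obtain ⟨rfl, rfl⟩ := List.cons.inj h
          rw [List.flatten_cons, ht, hL]

/-- boundary property of runs under nodup -/
lemma runs_boundary {l : List ℕ} (hnd : l.Nodup) :
    (runs l).Chain' (fun q r => lastVal q < headVal r) := by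
  induction l with
  | nil => simp [runs, List.Chain']
  | cons a t ih =>
    have ih' := ih hnd.of_cons
    rw [runs]
    rcases hL : runs t with _ | ⟨_ | ⟨b, q⟩, rs⟩
    · rw [pushRun_nil]; simp [List.Chain']
    · exfalso
      have : ([] : List ℕ) ∈ runs t := by rw [hL]; simp
      exact (runs_mem this).1 rfl
    · rw [hL] at ih'
      rw [pushRun_cons]
      split
      · refine List.isChain_cons.mpr ⟨?_, (List.isChain_cons.mp ih').2⟩
        intro r hr
        have := (List.isChain_cons.mp ih').1 r hr
        rwa [lastVal_cons_cons]
      · refine List.isChain_cons.mpr ⟨?_, ih'⟩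
        intro r hr
        simp only [List.head?_cons, Option.mem_def, Option.some.injEq] at hr
        subst hr
        have hb_mem : b ∈ t := by
          have : b ∈ (runs t).flatten := by rw [hL]; simp
          rwa [flatten_runs] at this
        have hne : a ≠ b := fun hab => (List.nodup_cons.mp hnd).1 (hab ▸ hb_mem)
        have : ¬ b < a := by assumption
        simp [lastVal, headVal]; omega

/-! ### index conditions -/

def Cond1 (π : List ℕ) : Prop :=
  ∀ i j, i < j → j + 1 < π.length → π.getD j 0 < π.getD (j+1) 0 → π.getD i 0 < π.getD (j+1) 0

def Cond2 (k : ℕ) (π : List ℕ) : Prop :=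
  ∀ s, s + k ≤ π.length → ∃ t, t < k - 1 ∧ π.getD (s+t) 0 < π.getD (s+t+1) 0

lemma not_occ312_iff {π : List ℕ} (hnd : π.Nodup) : ¬ Occ312 π ↔ Cond1 π := by
  constructor
  · intro h i j hij hj hasc
    by_contra hcon
    push_neg at hcon
    have hi : i < π.length := by omega
    have hne : π.getD i 0 ≠ π.getD (j+1) 0 := by
      rw [List.getD_eq_getElem _ _ hi, List.getD_eq_getElem _ _ hj]
      intro he
      have := (hnd.getElem_inj_iff).mp he
      omega
    exact h ⟨i, j, hij, hj, hasc, by omega⟩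
  · rintro h ⟨i, j, hij, hj, hasc, hbig⟩
    have := h i j hij hj hasc
    omega

lemma decWord_getD {k i : ℕ} (hi : i < k - 1) : (decWord k).getD i 0 = k - 1 - i := by
  rw [List.getD_eq_getElem _ _ (by simpa [decWord] using hi)]
  simp only [decWord, List.getElem_map, List.getElem_reverse, List.getElem_range,
    List.length_reverse, List.length_range]
  omega

lemma decWord_length (k : ℕ) : (decWord k).length = k - 1 := by simp [decWord]

lemma formsPOP_decWord_iff {k : ℕ} (hk : 2 ≤ k) (w : List ℕ) :
    FormsPOP (decWord k) w ↔ w.length = k - 1 ∧ w.Pairwise (· > ·) := by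
  rw [FormsPOP, decWord_length]
  constructor
  · rintro ⟨hlen, h⟩
    refine ⟨hlen, List.pairwise_iff_getElem.mpr ?_⟩
    intro i j hi hj hij
    have h2 := h j i (by omega) (by omega) (by rw [decWord_getD (by omega), decWord_getD (by omega)]; omega)
    rw [List.getD_eq_getElem _ _ hj, List.getD_eq_getElem _ _ hi] at h2
    exact h2
  · rintro ⟨hlen, hpw⟩
    refine ⟨hlen, fun i j hi hj hlt => ?_⟩
    rw [decWord_getD hi, decWord_getD hj] at hlt
    have hji : j < i := by omega
    have := List.pairwise_iff_getElem.mp hpw j i (by omega) (by omega) hji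
    rw [List.getD_eq_getElem _ _ (by omega), List.getD_eq_getElem _ _ (by omega)]
    exact this

/-- helper: a pairwise-decreasing block of length k inside π contradicts Cond2 -/
lemma no_dec_block {k : ℕ} {π A u C : List ℕ} (hc2 : Cond2 k π) (hπ : π = A ++ u ++ C)
    (hu : u.Pairwise (· > ·)) (hlen : u.length = k) : False := by
  have hAl : A.length + k ≤ π.length := by
    subst hπ; simp [hlen]
  obtain ⟨t, ht, hasc⟩ := hc2 A.length hAl
  have e1 : π.getD (A.length + t) 0 = u.getD t 0 := by
    subst hπ
    rw [List.append_assoc, List.getD_append_right _ _ _ _ (by omega), List.getD_append _ _ _ _ (by omega)]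
    congr 1; omega
  have e2 : π.getD (A.length + t + 1) 0 = u.getD (t+1) 0 := by
    subst hπ
    rw [List.append_assoc, List.getD_append_right _ _ _ _ (by omega), List.getD_append _ _ _ _ (by omega)]
    congr 1; omega
  rw [e1, e2] at hasc
  have := List.pairwise_iff_getElem.mp hu t (t+1) (by omega) (by omega) (by omega)
  rw [List.getD_eq_getElem _ _ (by omega), List.getD_eq_getElem _ _ (by omega)] at hasc
  omega

lemma not_occKS_iff {k : ℕ} (hk : 2 ≤ k) {π : List ℕ} (hnd : π.Nodup) (hc1 : Cond1 π) :
    ¬ OccursKS (decWord k) π ↔ Cond2 k π := by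
  constructor
  · intro h
    by_contra hcon
    unfold Cond2 at hcon
    push_neg at hcon
    obtain ⟨s, hs, hdesc⟩ := hcon
    apply h
    set u := (π.drop s).take k with hu
    have hul : u.length = k := by
      simp [hu]; omega
    have hugetD : ∀ t, t < k → u.getD t 0 = π.getD (s+t) 0 := by
      intro t htk
      rw [List.getD_eq_getElem _ _ (by omega), List.getD_eq_getElem _ _ (by omega)]
      simp [hu, List.getElem_take, List.getElem_drop]
    have hupw : u.Pairwise (· > ·) := by
      rw [← List.isChain_iff_pairwise]
      apply List.isChain_iff_getElem.mpr
      intro i hilen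
      have e1 := hugetD i (by omega)
      have e2 := hugetD (i+1) (by omega)
      rw [← Nat.add_assoc] at e2
      rw [← List.getD_eq_getElem u 0 (by omega), ← List.getD_eq_getElem u 0 (by omega), e1, e2]
      have hd := hdesc i (by omega)
      have hne : π.getD (s+i) 0 ≠ π.getD (s+i+1) 0 := by
        rw [List.getD_eq_getElem π 0 (show s+i < π.length by omega),
          List.getD_eq_getElem π 0 (show s+i+1 < π.length by omega)]
        intro he
        have := (hnd.getElem_inj_iff).mp he
        omega
      omega
    have hπeq : π = π.take s ++ u ++ π.drop (s+k) := by
      rw [List.append_assoc]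
      have : u ++ π.drop (s + k) = π.drop s := by
        rw [hu]
        have : π.drop (s+k) = (π.drop s).drop k := by rw [List.drop_drop]
        rw [this, List.take_append_drop]
      rw [this, List.take_append_drop]
    cases hu2 : u with
    | nil => exfalso; rw [hu2] at hul; simp at hul; omega
    | cons x w =>
      refine ⟨π.take s, x, [], w, π.drop (s+k), ?_, ?_, ?_⟩
      · rw [List.nil_append]
        conv_lhs => rw [hπeq, hu2]
        simp
      · rw [formsPOP_decWord_iff hk]
        constructor
        · have := hul; rw [hu2] at this; simp at this; omega
        · rw [hu2] at hupw; exact (List.pairwise_cons.mp hupw).2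
      · intro y hy
        rw [hu2] at hupw
        exact (List.pairwise_cons.mp hupw).1 y hy
  · rintro hc2 ⟨A, x, B, w, C, hπ, hpop, hlt⟩
    rw [formsPOP_decWord_iff hk] at hpop
    obtain ⟨hwl, hwpw⟩ := hpop
    have hwne : w ≠ [] := by intro h; rw [h] at hwl; simp at hwl; omega
    rcases List.eq_nil_or_concat B with rfl | ⟨B', b, rfl⟩
    · -- B empty : x :: w is a decreasing block of length k
      apply no_dec_block hc2 (A := A) (u := x :: w) (C := C)
      · rw [hπ]; simp
      · exact List.pairwise_cons.mpr ⟨hlt, hwpw⟩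
      · simp; omega
    · -- B = B' ++ [b]
      cases w with
      | nil => exact hwne rfl
      | cons w0 w' =>
        have hπ2 : π = (A ++ x :: B') ++ b :: w0 :: (w' ++ C) := by
          rw [hπ]; simp [List.concat_eq_append]
        have hblen : (A ++ x :: B').length = A.length + 1 + B'.length := by simp; omega
        have hgb : π.getD (A.length + 1 + B'.length) 0 = b := by
          rw [hπ2, List.getD_append_right _ _ _ _ (by omega)]
          rw [hblen]; simp
        have hgw0 : π.getD (A.length + 1 + B'.length + 1) 0 = w0 := by
          rw [hπ2, List.getD_append_right _ _ _ _ (by omega), hblen]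
          have : A.length + 1 + B'.length + 1 - (A.length + 1 + B'.length) = 1 := by omega
          rw [this]; simp
        have hgx : π.getD A.length 0 = x := by
          rw [hπ]
          rw [List.getD_append_right _ _ _ _ (by omega)]
          simp
        have hlenπ : π.length = A.length + B'.length + w'.length + C.length + 3 := by
          rw [hπ2]; simp; omega
        have hbw0 : b ≠ w0 := by
          have : π.Nodup := hnd
          rw [hπ2] at this
          have h2 := (List.nodup_append.mp this).2.1
          have := (List.nodup_cons.mp h2).1
          simp at this
          tauto
        by_cases hcase : b < w0
        · -- ascent at b, w0 : Cond1 gives x < w0, contradiction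
          have := hc1 A.length (A.length + 1 + B'.length) (by omega)
            (by omega) (by rw [hgb, hgw0]; exact hcase)
          rw [hgx, hgw0] at this
          have := hlt w0 (by simp)
          omega
        · -- b > w0 : b :: w0 :: w' is a decreasing block of length k
          apply no_dec_block hc2 (A := A ++ x :: B') (u := b :: w0 :: w') (C := C)
          · rw [hπ2]; simp
          · refine List.pairwise_cons.mpr ⟨?_, hwpw⟩
            intro y hy
            rcases List.mem_cons.mp hy with rfl | hy'
            · omega
            · have := (List.pairwise_cons.mp hwpw).1 y hy'
              omega
          · simp at hwl ⊢; omega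

/-! ### good decompositions -/

def GoodL (k : ℕ) (L : List (List ℕ)) : Prop :=
  (∀ p ∈ L, p ≠ [] ∧ p.Chain' (· > ·) ∧ p.length < k) ∧
  L.Chain' (fun p q => headVal p < headVal q)

lemma getD_within {p ρ : List ℕ} {t : ℕ} (ht : t < p.length) :
    (p ++ ρ).getD t 0 = p.getD t 0 := List.getD_append _ _ _ _ ht

lemma getD_beyond {p ρ : List ℕ} {j : ℕ} (hj : p.length ≤ j) :
    (p ++ ρ).getD j 0 = ρ.getD (j - p.length) 0 := List.getD_append_right _ _ _ _ hj

lemma getD_le_headVal {p : List ℕ} (hc : p.Chain' (· > ·)) {i : ℕ} (hi : i < p.length) :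
    p.getD i 0 ≤ headVal p := by
  rw [headVal_getD]
  rcases Nat.eq_zero_or_pos i with rfl | hpos
  · exact le_refl _
  · have hpw := List.isChain_iff_pairwise.mp hc
    have := List.pairwise_iff_getElem.mp hpw 0 i (by omega) hi hpos
    rw [List.getD_eq_getElem p 0 hi, List.getD_eq_getElem p 0 (show 0 < p.length by omega)]
    omega

lemma headVal_flatten_cons {q : List ℕ} {L : List (List ℕ)} (hq : q ≠ []) :
    headVal ((q :: L).flatten) = headVal q := by
  cases q with
  | nil => simp at hq
  | cons a t => simp [headVal]

lemma goodL_cond {k : ℕ} (hk : 2 ≤ k) {L : List (List ℕ)} (hL : GoodL k L) :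
    Cond1 L.flatten ∧ Cond2 k L.flatten := by
  induction L with
  | nil =>
    constructor
    · intro i j _ hj; simp at hj
    · intro s hs; simp at hs; omega
  | cons p L' ih =>
    obtain ⟨hmem, hch⟩ := hL
    obtain ⟨hpne, hpc, hplen⟩ := hmem p (by simp)
    obtain ⟨ihc1, ihc2⟩ := ih ⟨fun q hq => hmem q (by simp [hq]), hch.tail⟩
    set ρ := L'.flatten with hρ
    have hhd : ρ ≠ [] → headVal p < headVal ρ := by
      intro hρne
      cases L' with
      | nil => simp [hρ] at hρne
      | cons q L'' =>
        have hqne : q ≠ [] := (hmem q (by simp)).1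
        rw [hρ, headVal_flatten_cons hqne]
        exact (List.isChain_cons_cons.mp hch).1
    have hflat : (p :: L').flatten = p ++ ρ := by simp [hρ]
    rw [hflat]
    have hlen : (p ++ ρ).length = p.length + ρ.length := by simp
    have hρ0 : ρ ≠ [] → ρ.getD 0 0 = headVal ρ := fun _ => (headVal_getD ρ).symm
    have hpw := List.isChain_iff_pairwise.mp hpc
    constructor
    · intro i j hij hj1 hasc
      rcases Nat.lt_trichotomy (j+1) p.length with hcase | hcase | hcase
      · exfalso
        rw [getD_within (by omega), getD_within hcase] at hasc
        have := List.pairwise_iff_getElem.mp hpw j (j+1) (by omega) hcase (by omega)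
        rw [List.getD_eq_getElem _ _ (by omega), List.getD_eq_getElem _ _ hcase] at hasc
        omega
      · have hρne : ρ ≠ [] := by
          intro h; rw [h, List.append_nil] at hj1; omega
        rw [getD_within (show i < p.length by omega),
          getD_beyond (j := j+1) (by omega), hcase, Nat.sub_self, hρ0 hρne]
        calc p.getD i 0 ≤ headVal p := getD_le_headVal hpc (by omega)
          _ < headVal ρ := hhd hρne
      · have hjp : p.length ≤ j := by omega
        have hρne : ρ ≠ [] := by
          intro h; rw [h, List.append_nil] at hj1; omega
        have harith : j + 1 - p.length = (j - p.length) + 1 := by omega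
        rw [getD_beyond (j := j) hjp, getD_beyond (j := j+1) (by omega), harith] at hasc
        rw [getD_beyond (j := j+1) (by omega), harith]
        have hb : j - p.length + 1 < ρ.length := by
          rw [hlen] at hj1; omega
        rcases Nat.lt_or_ge i p.length with hi | hi
        · have hstep : ρ.getD 0 0 < ρ.getD (j - p.length + 1) 0 := by
            rcases Nat.eq_zero_or_pos (j - p.length) with h0 | h0
            · rw [h0] at hasc ⊢; exact hasc
            · exact ihc1 0 (j - p.length) h0 hb hasc
          rw [getD_within hi]
          calc p.getD i 0 ≤ headVal p := getD_le_headVal hpc hi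
            _ < headVal ρ := hhd hρne
            _ = ρ.getD 0 0 := (hρ0 hρne).symm
            _ < _ := hstep
        · rw [getD_beyond (j := i) hi]
          exact ihc1 (i - p.length) (j - p.length) (by omega) hb hasc
    · intro s hs
      rcases Nat.lt_or_ge s p.length with hsp | hsp
      · have hρne : ρ ≠ [] := by
          intro h
          rw [h, List.append_nil] at hs
          obtain ⟨_, _, hplen2⟩ := hmem p (by simp)
          omega
        refine ⟨p.length - 1 - s, by omega, ?_⟩
        have hp1 : 0 < p.length := List.length_pos_iff.mpr hpne
        have h2 : s + (p.length - 1 - s) + 1 = p.length := by omega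
        have h1 : s + (p.length - 1 - s) = p.length - 1 := by omega
        rw [h2, h1, getD_within (by omega), getD_beyond (j := p.length) (by omega),
          Nat.sub_self, hρ0 hρne]
        calc p.getD (p.length - 1) 0 = lastVal p := (lastVal_getD p hpne).symm
          _ ≤ headVal p := lastVal_le_headVal hpne hpc
          _ < headVal ρ := hhd hρne
      · obtain ⟨t, ht, hasc⟩ := ihc2 (s - p.length) (by omega)
        refine ⟨t, ht, ?_⟩
        rw [getD_beyond (by omega), getD_beyond (by omega)]
        have e1 : s + t - p.length = s - p.length + t := by omega
        have e2 : s + t + 1 - p.length = s - p.length + t + 1 := by omega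
        rw [e1, e2]
        exact hasc

lemma cond1_of_append {p ρ : List ℕ} (h : Cond1 (p ++ ρ)) : Cond1 ρ := by
  intro i j hij hj1 hasc
  have e : ∀ t, (p ++ ρ).getD (p.length + t) 0 = ρ.getD t 0 := by
    intro t; rw [getD_beyond (by omega)]; congr 1; omega
  have := h (p.length + i) (p.length + j) (by omega) (by simp; omega)
    (by rw [Nat.add_assoc, e, e]; exact hasc)
  rwa [Nat.add_assoc, e, e] at this

lemma cond2_of_append {k : ℕ} {p ρ : List ℕ} (h : Cond2 k (p ++ ρ)) : Cond2 k ρ := by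
  intro s hs
  obtain ⟨t, ht, hasc⟩ := h (p.length + s) (by simp; omega)
  refine ⟨t, ht, ?_⟩
  have e : ∀ u, (p ++ ρ).getD (p.length + u) 0 = ρ.getD u 0 := by
    intro u; rw [getD_beyond (by omega)]; congr 1; omega
  rwa [Nat.add_assoc, Nat.add_assoc, e, e] at hasc

lemma goodL_runs {k : ℕ} (hk : 2 ≤ k) :
    ∀ N (π : List ℕ), π.length ≤ N → π.Nodup → Cond1 π → Cond2 k π → GoodL k (runs π) := by
  intro N
  induction N with
  | zero =>
    intro π hN _ _ _
    have : π = [] := List.length_eq_zero_iff.mp (by omega)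
    subst this
    exact ⟨by simp [runs], by simp [runs, List.Chain']⟩
  | succ N ih =>
    intro π hN hnd hc1 hc2
    cases hπ : π with
    | nil => subst hπ; exact ⟨by simp [runs], by simp [runs, List.Chain']⟩
    | cons a t =>
      subst hπ
      obtain ⟨q, rs, hr⟩ := runs_cons a t
      set p := a :: q with hp
      obtain ⟨heq, hrs⟩ := runs_tail hr
      set ρ := rs.flatten with hρ
      have hpne : p ≠ [] := by simp [hp]
      have hpc : p.Chain' (· > ·) := (runs_mem (hr ▸ (by simp : p ∈ (p :: rs)))).2
      have hρlen : ρ.length + p.length = (a :: t).length := by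
        rw [heq]; simp [Nat.add_comm]
      have hρnd : ρ.Nodup := by
        rw [heq] at hnd; exact (List.nodup_append.mp hnd).2.1
      have hc1ρ : Cond1 ρ := cond1_of_append (heq ▸ hc1)
      have hc2ρ : Cond2 k ρ := cond2_of_append (heq ▸ hc2)
      have hih : GoodL k (runs ρ) := by
        refine ih ρ ?_ hρnd hc1ρ hc2ρ
        simp only [hp, List.length_cons] at hρlen
        simp only [List.length_cons] at hN
        omega
      rw [hrs] at hih
      -- p.length < k
      have hplen : p.length < k := by
        by_contra hcon
        push_neg at hcon
        obtain ⟨u, hu, hasc⟩ := hc2 0 (by rw [← hρlen]; omega)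
        simp only [Nat.zero_add] at hasc
        rw [heq, getD_within (by omega), getD_within (by omega)] at hasc
        have hpw := List.isChain_iff_pairwise.mp hpc
        have := List.pairwise_iff_getElem.mp hpw u (u+1) (by omega) (by omega) (by omega)
        rw [List.getD_eq_getElem _ _ (by omega), List.getD_eq_getElem _ _ (by omega)] at hasc
        omega
      refine ⟨?_, ?_⟩
      · intro r hrr
        rcases List.mem_cons.mp (hr ▸ hrr : r ∈ p :: rs) with rfl | hmem
        · exact ⟨hpne, hpc, hplen⟩
        · exact hih.1 r hmem
      · rw [hr]
        cases rs with
        | nil => simp [List.Chain']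
        | cons r0 rs' =>
          refine List.isChain_cons.mpr ⟨?_, hih.2⟩
          intro y hy
          simp only [List.head?_cons, Option.mem_def, Option.some.injEq] at hy
          subst hy
          -- headVal p < headVal r0
          have hbnd := runs_boundary hnd
          rw [hr] at hbnd
          have hlast : lastVal p < headVal r0 := (List.isChain_cons_cons.mp hbnd).1
          have hr0ne : r0 ≠ [] := (hih.1 r0 (by simp)).1
          have hρhd : headVal ρ = headVal r0 := headVal_flatten_cons hr0ne
          have hρne : 1 ≤ ρ.length := by
            rw [hρ, List.flatten_cons]
            cases r0 with
            | nil => exact absurd rfl hr0ne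
            | cons c u => simp
          rcases Nat.lt_or_ge p.length 2 with h2 | h2
          · -- singleton piece
            have hq : q = [] := by
              have hl : p.length = q.length + 1 := by rw [hp]; simp
              exact List.length_eq_zero_iff.mp (by omega)
            have heads : headVal p = lastVal p := by
              rw [hp, hq]; simp [headVal, lastVal]
            omega
          · have hget1 : (a :: t).getD (p.length - 1) 0 = lastVal p := by
              rw [heq, getD_within (by omega), lastVal_getD p hpne]
            have hget2 : (a :: t).getD (p.length) 0 = headVal r0 := by
              rw [heq, getD_beyond (by omega), Nat.sub_self, ← headVal_getD, hρhd]
            have hget0 : (a :: t).getD 0 0 = headVal p := by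
              rw [heq, getD_within (by omega), ← headVal_getD]
            have := hc1 0 (p.length - 1) (by omega)
              (by rw [heq]; simp; omega)
              (by rw [show p.length - 1 + 1 = p.length by omega, hget1, hget2]; exact hlast)
            rw [show p.length - 1 + 1 = p.length by omega, hget0, hget2] at this
            exact this

/-! ### part 1 assembly -/

lemma isPermOf_nodup {n : ℕ} {l : List ℕ} (h : IsPermOf n l) : l.Nodup := by
  rw [h.nodup_iff]
  exact (List.nodup_range (n := n)).map (fun a b hab => by omega)

lemma isPermOf_mem {n : ℕ} {l : List ℕ} (h : IsPermOf n l) (y : ℕ) :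
    y ∈ l ↔ 1 ≤ y ∧ y ≤ n := by
  rw [h.mem_iff]
  simp only [List.mem_map, List.mem_range]
  constructor
  · rintro ⟨x, hx, rfl⟩; omega
  · rintro ⟨h1, h2⟩; exact ⟨y - 1, by omega, by omega⟩

lemma part1 {k n : ℕ} (hk : 2 ≤ k) {π : List ℕ} (hperm : IsPermOf n π) :
    (¬ Occ312 π ∧ ¬ OccursKS (decWord k) π) ↔
      ∃ L : List (List ℕ), π = L.flatten ∧ GoodL k L := by
  have hnd : π.Nodup := isPermOf_nodup hperm
  constructor
  · rintro ⟨h1, h2⟩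
    have hc1 := (not_occ312_iff hnd).mp h1
    have hc2 := (not_occKS_iff hk hnd hc1).mp h2
    exact ⟨runs π, (flatten_runs π).symm, goodL_runs hk π.length π (le_refl _) hnd hc1 hc2⟩
  · rintro ⟨L, rfl, hL⟩
    obtain ⟨hc1, hc2⟩ := goodL_cond hk hL
    exact ⟨(not_occ312_iff hnd).mpr hc1, (not_occKS_iff hk hnd hc1).mpr hc2⟩

lemma goodL_iff_fin {k : ℕ} (π : List ℕ) :
    (∃ (i : ℕ) (D : Fin i → List ℕ),
        π = (List.ofFn D).flatten ∧
        (∀ j, D j ≠ [] ∧ (D j).Chain' (· > ·) ∧ (D j).length < k) ∧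
        (∀ (j : ℕ) (h : j + 1 < i),
          (D ⟨j, by omega⟩).headD 0 < (D ⟨j + 1, h⟩).headD 0)) ↔
      ∃ L : List (List ℕ), π = L.flatten ∧ GoodL k L := by
  constructor
  · rintro ⟨i, D, hflat, hmem, hch⟩
    refine ⟨List.ofFn D, hflat, ?_, ?_⟩
    · intro p hp
      rw [List.mem_ofFn] at hp
      obtain ⟨j, rfl⟩ := hp
      exact hmem j
    · apply List.isChain_iff_getElem.mpr
      intro j hj
      simp only [List.length_ofFn] at hj
      simp only [List.get_eq_getElem, List.getElem_ofFn]
      exact hch j (by omega)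
  · rintro ⟨L, hflat, hmem, hch⟩
    refine ⟨L.length, fun j => L.get j, ?_, ?_, ?_⟩
    · rw [List.ofFn_get]; exact hflat
    · intro j
      exact hmem (L.get j) (by apply List.get_mem)
    · intro j hj
      have := List.isChain_iff_getElem.mp hch j (by omega)
      exact this

/-! ### part 2 : the bijection -/

section Bij

variable {n : ℕ}

instance : IsAntisymm ℕ (· > ·) := ⟨fun _ _ h h' => absurd h (by omega)⟩

def keyF (b : Finset (Fin n)) : ℕ := b.sup (fun x => x.1 + 1)

def blockListOf (b : Finset (Fin n)) : List ℕ :=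
  ((b.sort (· ≤ ·)).map (fun x => x.1 + 1)).reverse

def finsetOf (p : List ℕ) : Finset (Fin n) :=
  Finset.univ.filter (fun x => x.1 + 1 ∈ p)

lemma mem_finsetOf {p : List ℕ} {x : Fin n} : x ∈ finsetOf p ↔ x.1 + 1 ∈ p := by
  simp [finsetOf]

lemma mem_blockListOf {b : Finset (Fin n)} {v : ℕ} :
    v ∈ blockListOf b ↔ ∃ x ∈ b, x.1 + 1 = v := by
  simp [blockListOf]

lemma blockListOf_length {b : Finset (Fin n)} : (blockListOf b).length = b.card := by
  simp [blockListOf]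

lemma blockListOf_nodup {b : Finset (Fin n)} : (blockListOf b).Nodup := by
  rw [blockListOf, List.nodup_reverse]
  exact (Finset.sort_nodup b _).map (fun x y hxy => by ext; omega)

lemma blockListOf_chain {b : Finset (Fin n)} : (blockListOf b).Chain' (· > ·) := by
  apply List.Pairwise.isChain
  rw [blockListOf, List.pairwise_reverse]
  have := (Finset.sortedLT_sort b).pairwise
  exact List.Pairwise.map _ (fun x y hxy => by simp; omega) this

lemma blockListOf_ne_nil {b : Finset (Fin n)} (hb : b.Nonempty) : blockListOf b ≠ [] := by
  intro h
  have := blockListOf_length (b := b)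
  rw [h] at this
  simp at this
  exact Finset.Nonempty.ne_empty hb (Finset.card_eq_zero.mp this.symm)

lemma headVal_mem {p : List ℕ} (hp : p ≠ []) : headVal p ∈ p := by
  cases p with
  | nil => exact absurd rfl hp
  | cons a q => simp [headVal]

lemma le_keyF {b : Finset (Fin n)} {x : Fin n} (hx : x ∈ b) : x.1 + 1 ≤ keyF b :=
  Finset.le_sup (f := fun x : Fin n => x.1 + 1) hx

lemma keyF_attained {b : Finset (Fin n)} (hb : b.Nonempty) : ∃ x ∈ b, keyF b = x.1 + 1 :=
  Finset.exists_mem_eq_sup b hb _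

lemma headVal_blockListOf {b : Finset (Fin n)} (hb : b.Nonempty) :
    headVal (blockListOf b) = keyF b := by
  have hne := blockListOf_ne_nil hb
  have h1 : headVal (blockListOf b) ∈ blockListOf b := headVal_mem hne
  obtain ⟨x, hx, hxv⟩ := mem_blockListOf.mp h1
  obtain ⟨y, hy, hyv⟩ := keyF_attained hb
  have h2 : y.1 + 1 ∈ blockListOf b := mem_blockListOf.mpr ⟨y, hy, rfl⟩
  have h3 := mem_le_headVal blockListOf_chain h2
  have h4 := le_keyF hx
  omega

lemma finsetOf_blockListOf {b : Finset (Fin n)} : finsetOf (blockListOf b) = b := by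
  ext x
  rw [mem_finsetOf, mem_blockListOf]
  constructor
  · rintro ⟨y, hy, hxy⟩
    have : y = x := by ext; omega
    rwa [← this]
  · intro hx; exact ⟨x, hx, rfl⟩

lemma keyF_injOn {P : Finpartition (Finset.univ : Finset (Fin n))} {b c : Finset (Fin n)}
    (hb : b ∈ P.parts) (hc : c ∈ P.parts) (h : keyF b = keyF c) : b = c := by
  have hbne : b.Nonempty := P.nonempty_of_mem_parts hb
  have hcne : c.Nonempty := P.nonempty_of_mem_parts hc
  obtain ⟨x, hx, hxv⟩ := keyF_attained hbne
  obtain ⟨y, hy, hyv⟩ := keyF_attained hcne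
  have : x = y := by ext; omega
  exact P.eq_of_mem_parts hb hc hx (this ▸ hy)

def partAt (P : Finpartition (Finset.univ : Finset (Fin n))) (m : ℕ) : Finset (Fin n) :=
  (P.parts.filter (fun b => keyF b = m)).sup id

lemma partAt_keyF {P : Finpartition (Finset.univ : Finset (Fin n))} {b : Finset (Fin n)}
    (hb : b ∈ P.parts) : partAt P (keyF b) = b := by
  have : P.parts.filter (fun c => keyF c = keyF b) = {b} := by
    ext c
    simp only [Finset.mem_filter, Finset.mem_singleton]
    constructor
    · rintro ⟨hc, hkc⟩; exact keyF_injOn hc hb hkc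
    · rintro rfl; exact ⟨hb, rfl⟩
  rw [partAt, this, Finset.sup_singleton, id]

def sortedKeys (P : Finpartition (Finset.univ : Finset (Fin n))) : List ℕ :=
  (P.parts.image keyF).sort (· ≤ ·)

lemma mem_sortedKeys {P : Finpartition (Finset.univ : Finset (Fin n))} {m : ℕ} :
    m ∈ sortedKeys P ↔ ∃ b ∈ P.parts, keyF b = m := by
  simp [sortedKeys]

def listOf (P : Finpartition (Finset.univ : Finset (Fin n))) : List ℕ :=
  ((sortedKeys P).map (fun m => blockListOf (partAt P m))).flatten

variable {P : Finpartition (Finset.univ : Finset (Fin n))}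

lemma partAt_spec {m : ℕ} (hm : m ∈ sortedKeys P) :
    partAt P m ∈ P.parts ∧ keyF (partAt P m) = m := by
  obtain ⟨b, hb, rfl⟩ := mem_sortedKeys.mp hm
  rw [partAt_keyF hb]
  exact ⟨hb, rfl⟩

lemma sortedKeys_chain : (sortedKeys P).Chain' (· < ·) :=
  List.Pairwise.isChain (Finset.sortedLT_sort _).pairwise

lemma sortedKeys_sorted : (sortedKeys P).Pairwise (· ≤ ·) := Finset.pairwise_sort _ _

lemma headVal_listOf_block {m : ℕ} (hm : m ∈ sortedKeys P) :
    headVal (blockListOf (partAt P m)) = m := by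
  obtain ⟨hmem, hkey⟩ := partAt_spec hm
  rw [headVal_blockListOf (P.nonempty_of_mem_parts hmem), hkey]

lemma goodL_listOf {k : ℕ} (hP : ∀ b ∈ P.parts, b.card < k) :
    GoodL k ((sortedKeys P).map (fun m => blockListOf (partAt P m))) := by
  constructor
  · intro p hp
    rw [List.mem_map] at hp
    obtain ⟨m, hm, rfl⟩ := hp
    obtain ⟨hmem, hkey⟩ := partAt_spec hm
    have hne : (partAt P m).Nonempty := P.nonempty_of_mem_parts hmem
    exact ⟨blockListOf_ne_nil hne, blockListOf_chain,
      by rw [blockListOf_length]; exact hP _ hmem⟩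
  · apply List.isChain_iff_getElem.mpr
    intro i hi
    simp only [List.length_map] at hi
    simp only [List.get_eq_getElem, List.getElem_map]
    have h1 : (sortedKeys P)[i] ∈ sortedKeys P := by apply List.getElem_mem
    have h2 : (sortedKeys P)[i+1] ∈ sortedKeys P := by apply List.getElem_mem
    rw [headVal_listOf_block h1, headVal_listOf_block h2]
    have := List.isChain_iff_getElem.mp (sortedKeys_chain (P := P)) i (by omega)
    simpa using this

lemma mem_listOf {v : ℕ} : v ∈ listOf P ↔ ∃ x : Fin n, v = x.1 + 1 := by
  rw [listOf]
  simp only [List.mem_flatten, List.mem_map]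
  constructor
  · rintro ⟨_, ⟨m, hm, rfl⟩, hv⟩
    obtain ⟨x, _, hxv⟩ := mem_blockListOf.mp hv
    exact ⟨x, hxv.symm⟩
  · rintro ⟨x, rfl⟩
    obtain ⟨b, ⟨hb, hxb⟩, _⟩ := P.existsUnique_mem (Finset.mem_univ x)
    refine ⟨blockListOf (partAt P (keyF b)), ⟨keyF b, mem_sortedKeys.mpr ⟨b, hb, rfl⟩, rfl⟩, ?_⟩
    rw [partAt_keyF hb]
    exact mem_blockListOf.mpr ⟨x, hxb, rfl⟩

lemma nodup_listOf : (listOf P).Nodup := by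
  rw [listOf, ← List.flatMap_def, List.nodup_flatMap]
  constructor
  · intro m _; exact blockListOf_nodup
  · have hnd : (sortedKeys P).Pairwise (· ≠ ·) :=
      (Finset.sort_nodup _ _ : (sortedKeys P).Nodup)
    apply List.Pairwise.imp_of_mem ?_ hnd
    intro m m' hm hm' hne
    intro v hv hv'
    obtain ⟨x, hx, hxv⟩ := mem_blockListOf.mp hv
    obtain ⟨y, hy, hyv⟩ := mem_blockListOf.mp hv'
    have hxy : x = y := by ext; omega
    obtain ⟨hmem, hkey⟩ := partAt_spec hm
    obtain ⟨hmem', hkey'⟩ := partAt_spec hm'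
    have : partAt P m = partAt P m' := P.eq_of_mem_parts hmem hmem' hx (hxy ▸ hy)
    exact hne (by rw [← hkey, ← hkey', this])

lemma isPermOf_listOf : IsPermOf n (listOf P) := by
  apply List.perm_of_nodup_nodup_toFinset_eq nodup_listOf
  · exact (List.nodup_range (n := n)).map (fun a b hab => by omega)
  · ext v
    simp only [List.mem_toFinset, List.mem_map, List.mem_range, mem_listOf]
    constructor
    · rintro ⟨x, rfl⟩; exact ⟨x.1, x.2, rfl⟩
    · rintro ⟨j, hj, rfl⟩; exact ⟨⟨j, hj⟩, rfl⟩

lemma list_toFinset_map {α β : Type*} [DecidableEq α] [DecidableEq β] (l : List α) (f : α → β) :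
    (l.map f).toFinset = l.toFinset.image f := by
  ext b; simp

lemma pieces_nodup {l : List ℕ} (hnd : l.Nodup) : ∀ p ∈ runs l, p.Nodup := by
  rw [← flatten_runs l] at hnd
  exact (List.nodup_flatten.mp hnd).1

lemma pieces_disjoint {l : List ℕ} (hnd : l.Nodup) : (runs l).Pairwise List.Disjoint := by
  rw [← flatten_runs l] at hnd
  exact (List.nodup_flatten.mp hnd).2

lemma mem_of_mem_runs {l p : List ℕ} (hp : p ∈ runs l) {y : ℕ} (hy : y ∈ p) : y ∈ l := by
  rw [← flatten_runs l]
  exact List.mem_flatten.mpr ⟨p, hp, hy⟩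

def Fparts (l : List ℕ) : Finset (Finset (Fin n)) := ((runs l).map finsetOf).toFinset

lemma mem_Fparts {l : List ℕ} {b : Finset (Fin n)} :
    b ∈ Fparts (n := n) l ↔ ∃ p ∈ runs l, finsetOf p = b := by
  simp [Fparts]

def Fpart {l : List ℕ} (hperm : IsPermOf n l) : Finpartition (Finset.univ : Finset (Fin n)) where
  parts := Fparts l
  supIndep := by
    rw [Finset.supIndep_iff_pairwiseDisjoint]
    intro b hb c hc hbc
    obtain ⟨p, hp, rfl⟩ := mem_Fparts.mp hb
    obtain ⟨q, hq, rfl⟩ := mem_Fparts.mp hc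
    have hpq : p ≠ q := fun h => hbc (by rw [h])
    have hdisj : List.Disjoint p q := by
      have hpw := pieces_disjoint (isPermOf_nodup hperm)
      haveI : Std.Symm (α := List ℕ) List.Disjoint := ⟨fun a b h => h.symm⟩
      exact List.Pairwise.forall hpw hp hq hpq
    rw [Function.onFun, Finset.disjoint_left]
    intro x hx
    rw [id, mem_finsetOf] at hx ⊢
    exact fun hx' => hdisj hx hx'
  sup_parts := by
    apply le_antisymm
    · exact Finset.sup_le (fun b _ => Finset.subset_univ b)
    · intro x _
      have hx : x.1 + 1 ∈ l := (isPermOf_mem hperm _).mpr ⟨by omega, by omega⟩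
      rw [← flatten_runs l] at hx
      obtain ⟨p, hp, hxp⟩ := List.mem_flatten.mp hx
      rw [Finset.mem_sup]
      exact ⟨finsetOf p, mem_Fparts.mpr ⟨p, hp, rfl⟩, mem_finsetOf.mpr hxp⟩
  bot_notMem := by
    intro hbot
    obtain ⟨p, hp, hep⟩ := mem_Fparts.mp hbot
    obtain ⟨hpne, _⟩ := runs_mem hp
    have hh : headVal p ∈ l := mem_of_mem_runs hp (headVal_mem hpne)
    obtain ⟨h1, h2⟩ := (isPermOf_mem hperm _).mp hh
    have : (⟨headVal p - 1, by omega⟩ : Fin n) ∈ finsetOf p := by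
      rw [mem_finsetOf]
      simpa [Nat.sub_add_cancel h1] using headVal_mem hpne
    rw [hep] at this
    simp at this

lemma card_finsetOf {l p : List ℕ} (hperm : IsPermOf n l) (hp : p ∈ runs l) :
    (finsetOf (n := n) p).card = p.length := by
  have himg : Finset.image (fun x : Fin n => x.1 + 1) (finsetOf p) = p.toFinset := by
    ext v
    simp only [Finset.mem_image, List.mem_toFinset, mem_finsetOf]
    constructor
    · rintro ⟨x, hx, rfl⟩; exact hx
    · intro hv
      obtain ⟨h1, h2⟩ := (isPermOf_mem hperm _).mp (mem_of_mem_runs hp hv)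
      exact ⟨⟨v - 1, by omega⟩, by simpa [Nat.sub_add_cancel h1] using hv, by simp; omega⟩
  have hinj : Function.Injective (fun x : Fin n => x.1 + 1) := fun x y h => by ext; simpa using h
  rw [← Finset.card_image_of_injective (finsetOf p) hinj, himg,
    List.toFinset_card_of_nodup (pieces_nodup (isPermOf_nodup hperm) p hp)]

lemma keyF_finsetOf {l p : List ℕ} (hperm : IsPermOf n l) (hp : p ∈ runs l) :
    keyF (finsetOf (n := n) p) = headVal p := by
  obtain ⟨hpne, hpc⟩ := runs_mem hp
  apply le_antisymm
  · apply Finset.sup_le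
    intro x hx
    exact mem_le_headVal hpc (mem_finsetOf.mp hx)
  · obtain ⟨h1, h2⟩ := (isPermOf_mem hperm _).mp (mem_of_mem_runs hp (headVal_mem hpne))
    have : (⟨headVal p - 1, by omega⟩ : Fin n) ∈ finsetOf p := by
      rw [mem_finsetOf]
      simpa [Nat.sub_add_cancel h1] using headVal_mem hpne
    have := le_keyF this
    simpa [Nat.sub_add_cancel h1] using this

lemma blockListOf_finsetOf {l p : List ℕ} (hperm : IsPermOf n l) (hp : p ∈ runs l) :
    blockListOf (finsetOf (n := n) p) = p := by
  obtain ⟨hpne, hpc⟩ := runs_mem hp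
  refine (fun hp h1 h2 => List.Perm.eq_of_pairwise' (r := (· > ·)) h1 h2 hp) ?_ ?_ ?_
  · apply List.perm_of_nodup_nodup_toFinset_eq blockListOf_nodup
      (pieces_nodup (isPermOf_nodup hperm) p hp)
    ext v
    simp only [List.mem_toFinset, mem_blockListOf, mem_finsetOf]
    constructor
    · rintro ⟨x, hx, rfl⟩; exact hx
    · intro hv
      obtain ⟨h1, h2⟩ := (isPermOf_mem hperm _).mp (mem_of_mem_runs hp hv)
      exact ⟨⟨v - 1, by omega⟩, by simpa [Nat.sub_add_cancel h1] using hv, by simp; omega⟩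
  · exact List.isChain_iff_pairwise.mp blockListOf_chain
  · exact List.isChain_iff_pairwise.mp hpc

lemma sort_toFinset_self {L : List ℕ} (h : L.Pairwise (· < ·)) :
    L.toFinset.sort (· ≤ ·) = L := by
  refine (fun hp h1 h2 => List.Perm.eq_of_pairwise' (r := (· ≤ ·)) h1 h2 hp) ?_ ?_ ?_
  · apply List.perm_of_nodup_nodup_toFinset_eq (Finset.sort_nodup _ _)
      (h.imp (fun hlt => Nat.ne_of_lt hlt))
    rw [Finset.sort_toFinset]
  · exact Finset.pairwise_sort _ _
  · exact h.imp (fun hlt => Nat.le_of_lt hlt)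

lemma listOf_Fpart {k : ℕ} {l : List ℕ} (hperm : IsPermOf n l) (hGood : GoodL k (runs l)) :
    listOf (Fpart hperm) = l := by
  have hkeys : sortedKeys (Fpart hperm) = (runs l).map headVal := by
    rw [sortedKeys]
    have hparts : (Fpart hperm).parts = Fparts l := rfl
    have : (Fparts (n := n) l).image keyF = ((runs l).map headVal).toFinset := by
      rw [Fparts, ← list_toFinset_map]
      congr 1
      rw [List.map_map]
      exact List.map_congr_left (fun p hp => keyF_finsetOf hperm hp)
    rw [hparts, this]
    apply sort_toFinset_self
    rw [← List.isChain_iff_pairwise]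
    exact (List.isChain_map _).mpr hGood.2
  rw [listOf, hkeys, List.map_map]
  have hpt : ∀ p ∈ runs l,
      ((fun m => blockListOf (partAt (Fpart hperm) m)) ∘ headVal) p = id p := by
    intro p hp
    have hmemparts : finsetOf p ∈ (Fpart hperm).parts := mem_Fparts.mpr ⟨p, hp, rfl⟩
    show blockListOf (partAt (Fpart hperm) (headVal p)) = p
    rw [← keyF_finsetOf hperm hp, partAt_keyF hmemparts, blockListOf_finsetOf hperm hp]
  rw [List.map_congr_left hpt, List.map_id, flatten_runs]

lemma runs_listOf :
    runs (listOf P) = (sortedKeys P).map (fun m => blockListOf (partAt P m)) := by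
  apply runs_unique
  · intro p hp
    obtain ⟨m, hm, rfl⟩ := List.mem_map.mp hp
    exact blockListOf_ne_nil (P.nonempty_of_mem_parts (partAt_spec hm).1)
  · intro p hp
    obtain ⟨m, hm, rfl⟩ := List.mem_map.mp hp
    exact blockListOf_chain
  · apply List.isChain_iff_getElem.mpr
    intro i hi
    simp only [List.length_map] at hi
    simp only [List.get_eq_getElem, List.getElem_map]
    have h1 : (sortedKeys P)[i] ∈ sortedKeys P := by apply List.getElem_mem
    have h2 : (sortedKeys P)[i+1] ∈ sortedKeys P := by apply List.getElem_mem
    have e2 := headVal_listOf_block h2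
    have hlt : (sortedKeys P)[i] < (sortedKeys P)[i+1] := by
      have := List.isChain_iff_getElem.mp (sortedKeys_chain (P := P)) i (by omega)
      simpa using this
    have hne := blockListOf_ne_nil (P.nonempty_of_mem_parts (partAt_spec h1).1)
    have hle := lastVal_le_headVal hne blockListOf_chain
    have e1 := headVal_listOf_block h1
    omega

lemma Fpart_listOf : Fpart (isPermOf_listOf (P := P)) = P := by
  apply Finpartition.ext
  show Fparts (listOf P) = P.parts
  have : Fparts (n := n) (listOf P) = ((sortedKeys P).map (partAt P)).toFinset := by
    rw [Fparts, runs_listOf, List.map_map]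
    congr 1
    apply List.map_congr_left
    intro m hm
    show finsetOf (blockListOf (partAt P m)) = partAt P m
    exact finsetOf_blockListOf
  rw [this]
  ext b
  simp only [List.mem_toFinset, List.mem_map]
  constructor
  · rintro ⟨m, hm, rfl⟩
    exact (partAt_spec hm).1
  · intro hb
    exact ⟨keyF b, mem_sortedKeys.mpr ⟨b, hb, rfl⟩, partAt_keyF hb⟩

lemma goodL_runs_of_avoid {k : ℕ} (hk : 2 ≤ k) {l : List ℕ} (hperm : IsPermOf n l)
    (h1 : ¬ Occ312 l) (h2 : ¬ OccursKS (decWord k) l) : GoodL k (runs l) := by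
  have hnd := isPermOf_nodup hperm
  have hc1 := (not_occ312_iff hnd).mp h1
  have hc2 := (not_occKS_iff hk hnd hc1).mp h2
  exact goodL_runs hk l.length l (le_refl _) hnd hc1 hc2

end Bij

end AvoidAux


open AvoidAux in
/-- A permutation avoids `3-12` and `k-(k-1)⋯21` iff it is a concatenation of
decreasing sequences, each of length `< k`, with increasing first elements;
consequently such permutations are in bijection with set partitions of `{1,…,n}`
all of whose blocks have size `< k`. -/
theorem avoid_312_and_kdec (k : ℕ) (hk : 2 ≤ k) (n : ℕ) :
    (∀ π : List ℕ, IsPermOf n π →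
      ((¬ Occ312 π ∧ ¬ OccursKS (decWord k) π) ↔
        ∃ (i : ℕ) (D : Fin i → List ℕ),
          π = (List.ofFn D).flatten ∧
          (∀ j, D j ≠ [] ∧ (D j).Chain' (· > ·) ∧ (D j).length < k) ∧
          (∀ (j : ℕ) (h : j + 1 < i),
            (D ⟨j, by omega⟩).headD 0 < (D ⟨j + 1, h⟩).headD 0))) ∧
    Nonempty ({l : List ℕ // IsPermOf n l ∧ ¬ Occ312 l ∧ ¬ OccursKS (decWord k) l} ≃
      {P : Finpartition (Finset.univ : Finset (Fin n)) // ∀ b ∈ P.parts, b.card < k}) := by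
  constructor
  · intro π hπ
    exact (part1 hk hπ).trans (goodL_iff_fin π).symm
  · refine ⟨{
      toFun := fun x => ⟨Fpart x.2.1, ?_⟩
      invFun := fun y => ⟨listOf y.1, isPermOf_listOf, ?_⟩
      left_inv := ?_
      right_inv := ?_ }⟩
    · -- card bound
      intro b hb
      obtain ⟨p, hp, rfl⟩ := mem_Fparts.mp hb
      rw [card_finsetOf x.2.1 hp]
      have hGood := goodL_runs_of_avoid hk x.2.1 x.2.2.1 x.2.2.2
      exact (hGood.1 p hp).2.2
    · -- avoidance of listOf
      refine (part1 hk isPermOf_listOf).mpr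
        ⟨(sortedKeys y.1).map (fun m => blockListOf (partAt y.1 m)), rfl, goodL_listOf y.2⟩
    · intro x
      apply Subtype.ext
      exact listOf_Fpart x.2.1 (goodL_runs_of_avoid hk x.2.1 x.2.2.1 x.2.2.2)
    · intro y
      apply Subtype.ext
      exact Fpart_listOf
end

section
/- Avoiding the pattern 2-1-3 is equivalent to avoiding the pattern 2-13: a permutation π = a_1...a_n has indices i < j < l with a_j < a_i < a_l if and only if it has indices i < j with j+1 ≤ n and a_j < a_i < a_{j+1}. -/
lemma getD_ne_of_nodup (π : List ℕ) (hnd : π.Nodup) {a b : ℕ}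
    (ha : a < π.length) (hb : b < π.length) (hab : a ≠ b) :
    π.getD a 0 ≠ π.getD b 0 := by
  rw [List.getD_eq_getElem _ _ ha, List.getD_eq_getElem _ _ hb]
  intro h
  exact hab (List.Nodup.getElem_inj_iff hnd |>.mp h)

/-- Avoiding `2-1-3` is equivalent to avoiding `2-13`: a permutation has indices
`i < j < l` with `π j < π i < π l` iff it has indices `i < j` with `j+1` a valid
position and `π j < π i < π (j+1)`. -/
theorem avoid_213_iff (n : ℕ) (π : List ℕ) (hperm : IsPermOf n π) :
    (∃ i j l, i < j ∧ j < l ∧ l < π.length ∧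
        π.getD j 0 < π.getD i 0 ∧ π.getD i 0 < π.getD l 0) ↔
    (∃ i j, i < j ∧ j + 1 < π.length ∧
        π.getD j 0 < π.getD i 0 ∧ π.getD i 0 < π.getD (j + 1) 0) := by
  have hnd : π.Nodup := hperm.nodup_iff.mpr
    ((List.nodup_range : (List.range n).Nodup).map (fun a b h => by omega))
  constructor
  · rintro ⟨i, j, l, hij, hjl, hl, h1, h2⟩
    set P : ℕ → Prop := fun m => j ≤ m ∧ π.getD m 0 < π.getD i 0 with hP
    have hPdec : DecidablePred P := fun m => by simp only [hP]; infer_instance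
    set k := Nat.findGreatest P (l - 1) with hk
    have hPk : P k := Nat.findGreatest_spec (by omega : j ≤ l - 1) ⟨le_refl j, h1⟩
    have hkle : k ≤ l - 1 := Nat.findGreatest_le _
    refine ⟨i, k, lt_of_lt_of_le hij hPk.1, by omega, hPk.2, ?_⟩
    rcases eq_or_lt_of_le (show k + 1 ≤ l by omega) with heq | hlt
    · rw [heq]; exact h2
    · have hnP : ¬ P (k + 1) :=
        Nat.findGreatest_is_greatest (Nat.lt_succ_self k) (by omega)
      have hge : π.getD i 0 ≤ π.getD (k + 1) 0 := by
        by_contra hc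
        exact hnP ⟨by omega, by omega⟩
      have hne : π.getD i 0 ≠ π.getD (k + 1) 0 :=
        getD_ne_of_nodup π hnd (by omega) (by omega) (by omega)
      omega
  · rintro ⟨i, j, hij, hj, h1, h2⟩
    exact ⟨i, j, j + 1, hij, Nat.lt_succ_self j, hj, h1, h2⟩
end

section
/- Let P = σ₁-σ₂ and Q = σ₁σ₂ be partially ordered generalized patterns (Q obtained from P by removing the dash). Then Av(P) = Av(Q) if and only if for every permutation of the form AXB in which the subsequence AB (with |A| = |σ₁|, |B| = |σ₂|, A the prefix, B the suffix) forms an occurrence of Q with A forming σ₁ and B forming σ₂, the permutation AXB itself contains an occurrence of Q. -/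
/-- `Gapped ws π` holds when `π = g₀ ++ w₁ ++ g₁ ++ w₂ ++ ⋯ ++ wₖ ++ gₖ`, i.e. the
words in `ws` occur in order as contiguous blocks of `π`, with arbitrary gaps. -/
inductive Gapped : List (List ℕ) → List ℕ → Prop
  | nil (g : List ℕ) : Gapped [] g
  | cons (w : List ℕ) (ws : List (List ℕ)) (g rest : List ℕ) :
      Gapped ws rest → Gapped (w :: ws) (g ++ w ++ rest)

/-- `π` contains an occurrence of the partially ordered generalized pattern whose
dash-separated contiguous segments are `segs`. -/
def OccursPOP (segs : List (List ℕ)) (π : List ℕ) : Prop :=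
  ∃ ws : List (List ℕ), ws.length = segs.length ∧
    (∀ i, (ws.getD i []).length = (segs.getD i []).length) ∧
    FormsPOP segs.flatten ws.flatten ∧ Gapped ws π

/-! ### Auxiliary lemmas -/

lemma gapped_singleton {v π : List ℕ} (h : Gapped [v] π) :
    ∃ g rest, π = g ++ v ++ rest := by
  cases h with
  | cons _ _ g rest _ => exact ⟨g, rest, rfl⟩

lemma gapped_pair {a b π : List ℕ} (h : Gapped [a, b] π) :
    ∃ g₀ g₁ g₂, π = g₀ ++ a ++ g₁ ++ b ++ g₂ := by
  cases h with
  | cons _ _ g₀ rest hrest =>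
    obtain ⟨g₁, g₂, rfl⟩ := gapped_singleton hrest
    exact ⟨g₀, g₁, g₂, by simp [List.append_assoc]⟩

/-- The rank of `x` among the entries of `w`. -/
def rankIn (w : List ℕ) (x : ℕ) : ℕ := (w.toFinset.filter (· ≤ x)).card

lemma rankIn_mono (w : List ℕ) {x y : ℕ} (hxy : x ≤ y) : rankIn w x ≤ rankIn w y := by
  apply Finset.card_le_card
  intro z hz
  simp only [Finset.mem_filter] at hz ⊢
  exact ⟨hz.1, hz.2.trans hxy⟩

lemma rankIn_lt_iff (w : List ℕ) {x y : ℕ} (hy : y ∈ w) :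
    x < y ↔ rankIn w x < rankIn w y := by
  constructor
  · intro hxy
    apply Finset.card_lt_card
    constructor
    · intro z hz
      simp only [Finset.mem_filter] at hz ⊢
      exact ⟨hz.1, hz.2.trans hxy.le⟩
    · intro hsub
      have := hsub (by simp [Finset.mem_filter, List.mem_toFinset, hy] :
        y ∈ Finset.filter (· ≤ y) w.toFinset)
      simp only [Finset.mem_filter] at this
      omega
  · intro h
    by_contra hxy
    exact absurd (rankIn_mono w (by omega : y ≤ x)) (by omega)

lemma rankIn_pos (w : List ℕ) {x : ℕ} (hx : x ∈ w) : 1 ≤ rankIn w x := by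
  have hm : x ∈ Finset.filter (· ≤ x) w.toFinset := by
    simp [List.mem_toFinset, hx]
  simpa [rankIn] using Finset.card_pos.mpr ⟨x, hm⟩

lemma rankIn_le (w : List ℕ) (x : ℕ) : rankIn w x ≤ w.length :=
  (Finset.card_filter_le _ _).trans w.toFinset_card_le

/-- Standardizing a duplicate-free word gives a permutation of `{1,…,m}`. -/
lemma isPermOf_map_rankIn (w : List ℕ) (hw : w.Nodup) :
    IsPermOf w.length (w.map (rankIn w)) := by
  set f := rankIn w with hf
  set L := (List.range w.length).map (· + 1) with hL
  have hnd : (w.map f).Nodup := by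
    refine hw.map_on ?_
    intro x hx y hy hfeq
    by_contra hne
    rcases Nat.lt_or_ge x y with h | h
    · exact absurd hfeq (Nat.ne_of_lt ((rankIn_lt_iff w hy).mp h))
    · have hyx : y < x := by omega
      exact absurd hfeq.symm (Nat.ne_of_lt ((rankIn_lt_iff w hx).mp hyx))
  have hndL : L.Nodup := by
    refine List.nodup_range.map ?_
    intro a b hab; simpa using hab
  have hmemL : ∀ k, k ∈ L ↔ 1 ≤ k ∧ k ≤ w.length := by
    intro k
    simp only [hL, List.mem_map, List.mem_range]
    constructor
    · rintro ⟨a, ha, rfl⟩; omega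
    · rintro ⟨h1, h2⟩; exact ⟨k - 1, by omega, by omega⟩
  have hsub : (w.map f).toFinset ⊆ L.toFinset := by
    intro k hk
    simp only [List.mem_toFinset, List.mem_map] at hk
    obtain ⟨x, hx, rfl⟩ := hk
    simp only [List.mem_toFinset]
    exact (hmemL _).mpr ⟨rankIn_pos w hx, rankIn_le w x⟩
  have hcard : L.toFinset.card ≤ (w.map f).toFinset.card := by
    rw [List.toFinset_card_of_nodup hndL, List.toFinset_card_of_nodup hnd]
    simp [hL]
  have heq := Finset.eq_of_subset_of_card_le hsub hcard
  rw [IsPermOf, List.perm_ext_iff_of_nodup hnd hndL]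
  intro a
  rw [← List.mem_toFinset, ← List.mem_toFinset (l := L), heq]

/-- `FormsPOP` is invariant under order-isomorphic relabelling of the word. -/
lemma formsPOP_map_iff {σ u : List ℕ} {f : ℕ → ℕ}
    (hf : ∀ x ∈ u, ∀ y ∈ u, (x < y ↔ f x < f y)) :
    FormsPOP σ (u.map f) ↔ FormsPOP σ u := by
  unfold FormsPOP
  simp only [List.length_map]
  have key : ∀ i, i < u.length → (u.map f).getD i 0 = f (u.getD i 0) := by
    intro i hi
    rw [List.getD_eq_getElem _ _ (by simpa using hi), List.getD_eq_getElem _ _ hi,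
      List.getElem_map]
  constructor
  · rintro ⟨hl, h⟩
    refine ⟨hl, fun i j hi hj hσ => ?_⟩
    have hiu : i < u.length := by omega
    have hju : j < u.length := by omega
    have hh := h i j hi hj hσ
    rw [key i hiu, key j hju] at hh
    have hmi : u.getD i 0 ∈ u := by
      rw [List.getD_eq_getElem _ _ hiu]; exact List.getElem_mem _
    have hmj : u.getD j 0 ∈ u := by
      rw [List.getD_eq_getElem _ _ hju]; exact List.getElem_mem _
    exact (hf _ hmi _ hmj).mpr hh
  · rintro ⟨hl, h⟩
    refine ⟨hl, fun i j hi hj hσ => ?_⟩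
    have hiu : i < u.length := by omega
    have hju : j < u.length := by omega
    rw [key i hiu, key j hju]
    have hmi : u.getD i 0 ∈ u := by
      rw [List.getD_eq_getElem _ _ hiu]; exact List.getElem_mem _
    have hmj : u.getD j 0 ∈ u := by
      rw [List.getD_eq_getElem _ _ hju]; exact List.getElem_mem _
    exact (hf _ hmi _ hmj).mp (h i j hi hj hσ)

/-- A contiguous occurrence of `σ₁σ₂` gives a dashed occurrence of `σ₁-σ₂`. -/
lemma occQ_occP {σ₁ σ₂ π : List ℕ} (h : OccursPOP [σ₁ ++ σ₂] π) :
    OccursPOP [σ₁, σ₂] π := by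
  obtain ⟨ws, hl, hlen, hforms, hgap⟩ := h
  have hl1 : ws.length = 1 := by simpa using hl
  obtain ⟨v, rfl⟩ := List.length_eq_one_iff.mp hl1
  have hv : v.length = σ₁.length + σ₂.length := by
    have := hlen 0; simp at this; omega
  obtain ⟨g, rest, rfl⟩ := gapped_singleton hgap
  refine ⟨[v.take σ₁.length, v.drop σ₁.length], by simp, ?_, ?_, ?_⟩
  · intro i
    match i with
    | 0 => simp [List.length_take]; omega
    | 1 => simp [List.length_drop]; omega
    | (n+2) => simp [List.getD]
  · simpa using hforms
  · have heq : g ++ v ++ rest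
        = g ++ v.take σ₁.length ++ ([] ++ v.drop σ₁.length ++ rest) := by
      simp only [List.nil_append, List.append_assoc]
      rw [← List.append_assoc (v.take σ₁.length), List.take_append_drop]
    rw [heq]
    exact Gapped.cons _ _ _ _ (Gapped.cons _ _ _ _ (Gapped.nil _))

/-- Lemma pop: for `P = σ₁-σ₂` and `Q = σ₁σ₂`, `Av(P) = Av(Q)` iff every
permutation `AXB`, with `A` of length `|σ₁|` and `B` of length `|σ₂|` such that
`AB` forms `Q` (so `A` forms `σ₁` and `B` forms `σ₂`), contains an occurrence
of `Q`. -/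
theorem av_eq_iff_axb (σ₁ σ₂ : List ℕ) (h₁ : σ₁ ≠ []) (h₂ : σ₂ ≠ []) :
    (∀ (n : ℕ) (π : List ℕ), IsPermOf n π →
        (¬ OccursPOP [σ₁, σ₂] π ↔ ¬ OccursPOP [σ₁ ++ σ₂] π)) ↔
    (∀ (n : ℕ) (A X B : List ℕ), IsPermOf n (A ++ X ++ B) →
        A.length = σ₁.length → B.length = σ₂.length →
        FormsPOP (σ₁ ++ σ₂) (A ++ B) →
        OccursPOP [σ₁ ++ σ₂] (A ++ X ++ B)) := by
  constructor
  · -- forward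
    intro h n A X B hperm hA hB hAB
    have hP : OccursPOP [σ₁, σ₂] (A ++ X ++ B) := by
      refine ⟨[A, B], by simp, ?_, by simpa using hAB, ?_⟩
      · intro i
        match i with
        | 0 => simpa using hA
        | 1 => simpa using hB
        | (n+2) => simp [List.getD]
      · have heq : A ++ X ++ B = [] ++ A ++ (X ++ B ++ []) := by
          simp [List.append_assoc]
        rw [heq]
        exact Gapped.cons _ _ _ _ (Gapped.cons _ _ _ _ (Gapped.nil _))
    by_contra hq
    exact ((h n _ hperm).mpr hq) hP
  · -- backward
    intro h n π hperm
    constructor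
    · intro hnp hq
      exact hnp (occQ_occP hq)
    · intro hnq hp
      apply hnq
      obtain ⟨ws, hl, hlen, hforms, hgap⟩ := hp
      have hl2 : ws.length = 2 := by simpa using hl
      obtain ⟨a, b, rfl⟩ := List.length_eq_two.mp hl2
      have ha : a.length = σ₁.length := by have := hlen 0; simpa using this
      have hb : b.length = σ₂.length := by have := hlen 1; simpa using this
      obtain ⟨g₀, g₁, g₂, hπ⟩ := gapped_pair hgap
      set w : List ℕ := a ++ g₁ ++ b with hw
      have hπw : π = g₀ ++ w ++ g₂ := by
        rw [hπ]; simp [hw, List.append_assoc]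
      have hπnd : π.Nodup := by
        have hLnd : ((List.range n).map (· + 1)).Nodup := by
          refine List.nodup_range.map ?_
          intro x y hxy; simpa using hxy
        exact hperm.nodup_iff.mpr hLnd
      have hwnd : w.Nodup := by
        have hinf : w <:+: π := ⟨g₀, g₂, by rw [hπw]⟩
        exact hinf.sublist.nodup hπnd
      set f := rankIn w with hfdef
      have hfiff : ∀ x ∈ w, ∀ y ∈ w, (x < y ↔ f x < f y) := by
        intro x _ y hy
        exact rankIn_lt_iff w hy
      have hmapw : a.map f ++ g₁.map f ++ b.map f = w.map f := by simp [hw]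
      have hpermw : IsPermOf w.length (a.map f ++ g₁.map f ++ b.map f) := by
        rw [hmapw]; exact isPermOf_map_rankIn w hwnd
      have habmem : ∀ x ∈ a ++ b, x ∈ w := by
        intro x hx
        simp only [hw, List.mem_append] at hx ⊢
        tauto
      have hformsab : FormsPOP (σ₁ ++ σ₂) (a.map f ++ b.map f) := by
        rw [← List.map_append]
        refine (formsPOP_map_iff ?_).mpr (by simpa using hforms)
        intro x hx y hy
        exact hfiff x (habmem x hx) y (habmem y hy)
      have hocc := h w.length (a.map f) (g₁.map f) (b.map f) hpermw
        (by simpa using ha) (by simpa using hb) hformsab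
      obtain ⟨ws', hl', hlen', hforms', hgap'⟩ := hocc
      have hl1 : ws'.length = 1 := by simpa using hl'
      obtain ⟨v, rfl⟩ := List.length_eq_one_iff.mp hl1
      rw [hmapw] at hgap'
      obtain ⟨g, rest, heqmap⟩ := gapped_singleton hgap'
      -- pull the block back from `w.map f` to `w`
      set g' := w.take g.length with hg'
      set v' := (w.drop g.length).take v.length with hv'
      set rest' := (w.drop g.length).drop v.length with hrest'
      have hwsplit : w = g' ++ (v' ++ rest') := by
        rw [hv', hrest', List.take_append_drop, hg', List.take_append_drop]
      have hdropmap : (w.drop g.length).map f = v ++ rest := by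
        rw [List.map_drop, heqmap, List.append_assoc, List.drop_left]
      have hmapv : v'.map f = v := by
        rw [hv', List.map_take, hdropmap, List.take_left]
      have hlenv : v'.length = v.length := by
        have := congrArg List.length hmapv
        simpa using this
      have hvlen : v.length = (σ₁ ++ σ₂).length := by
        have := hlen' 0; simpa using this
      have hv'sub : v'.Sublist w := by
        rw [hv']
        exact (List.take_sublist _ _).trans (List.drop_sublist _ _)
      have hformsv' : FormsPOP (σ₁ ++ σ₂) v' := by
        have hf' : ∀ x ∈ v', ∀ y ∈ v', (x < y ↔ f x < f y) := by
          intro x hx y hy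
          exact hfiff x (hv'sub.mem hx) y (hv'sub.mem hy)
        refine (formsPOP_map_iff hf').mp ?_
        rw [hmapv]
        simpa using hforms'
      refine ⟨[v'], by simp, ?_, by simpa using hformsv', ?_⟩
      · intro i
        match i with
        | 0 => simpa using hlenv.trans hvlen
        | (n+1) => simp [List.getD]
      · have hπ' : π = (g₀ ++ g') ++ v' ++ (rest' ++ g₂) := by
          rw [hπw, hwsplit]; simp [List.append_assoc]
        rw [hπ']
        exact Gapped.cons _ _ _ _ (Gapped.nil _)
end
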